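/- arXiv:2101.12515 — 5 statements merged into one kernel-verified Lean document; each statement's English description precedes it below -/
import Mathlib

section
/- Fix x, y ∈ ℂ \ {0} with x ≠ 1, y ≠ 1 and xy ≠ 1. Then, as q tends to 0 through nonzero complex numbers, the quotient (δ_q(x, y) − (xy − 1)/((x − 1)(y − 1)))/q tends to x⁻¹y⁻¹ − xy; that is, δ admits the q-expansion δ_q(x,y) = (1 − (xy)⁻¹)/((1 − x⁻¹)(1 − y⁻¹)) + q(x⁻¹y⁻¹ − xy) + O(q²). -/
open scoped BigOperators

/-- The multiplicative Jacobi theta function, renormalized: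
`φ_q(x) = (x - 1) * ∏_{n=1}^∞ (1 - qⁿx)(1 - qⁿx⁻¹)`. -/
noncomputable def phi (q x : ℂ) : ℂ :=
  (x - 1) * ∏' n : ℕ, ((1 - q ^ (n + 1) * x) * (1 - q ^ (n + 1) * x⁻¹))

/-- Zagier's function `δ(x,y) = θ'(1)·θ(xy)/(θ(x)·θ(y))`, expressed via `φ_q`:
`δ_q(x,y) = (∏_{n=1}^∞ (1 - qⁿ)²)·φ_q(xy)/(φ_q(x)·φ_q(y))`. -/
noncomputable def del (q x y : ℂ) : ℂ :=
  (∏' n : ℕ, (1 - q ^ (n + 1)) ^ 2) * phi q (x * y) / (phi q x * phi q y)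


open Complex Filter Metric

noncomputable def rr (a : ℂ) : ℝ := min (1/2) (1/(2*(‖a‖+1)))

lemma rr_pos (a : ℂ) : 0 < rr a := by
  apply lt_min (by norm_num)
  positivity

lemma rr_lt_one (a : ℂ) : rr a < 1 := lt_of_le_of_lt (min_le_left _ _) (by norm_num)

lemma key_small {a q : ℂ} (hq : ‖q‖ < rr a) (n : ℕ) : ‖q ^ (n+1) * a‖ ≤ 1/2 := by
  have h0 : 0 ≤ ‖q‖ := norm_nonneg q
  have h1 : ‖q‖ ≤ 1 := le_trans (le_of_lt (lt_of_lt_of_le hq (min_le_left _ _))) (by norm_num)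
  have h2 : ‖q‖ ≤ 1/(2*(‖a‖+1)) := le_of_lt (lt_of_lt_of_le hq (min_le_right _ _))
  have hpow : ‖q‖ ^ (n+1) ≤ ‖q‖ := pow_le_of_le_one h0 h1 (Nat.succ_ne_zero n)
  have ha : 0 ≤ ‖a‖ := norm_nonneg a
  calc ‖q ^ (n+1) * a‖ = ‖q‖^(n+1) * ‖a‖ := by rw [norm_mul, norm_pow]
    _ ≤ (1/(2*(‖a‖+1))) * ‖a‖ := by
        apply mul_le_mul_of_nonneg_right (le_trans hpow h2) ha
    _ ≤ 1/2 := by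
        rw [div_mul_eq_mul_div, one_mul, div_le_div_iff₀ (by positivity) (by norm_num)]
        nlinarith

lemma key_ne {a q : ℂ} (hq : ‖q‖ < rr a) (n : ℕ) : 1 - q ^ (n+1) * a ≠ 0 := by
  intro h
  have h2 := key_small hq n
  have : (1:ℂ) = q ^ (n+1) * a := by linear_combination h
  rw [← this] at h2
  norm_num at h2

lemma key_half_le {a q : ℂ} (hq : ‖q‖ < rr a) (n : ℕ) : 1/2 ≤ ‖1 - q ^ (n+1) * a‖ := by
  have := norm_sub_norm_le (1:ℂ) (q ^ (n+1) * a)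
  have h2 := key_small hq n
  simp only [norm_one] at this
  linarith

lemma key_slit {a q : ℂ} (hq : ‖q‖ < rr a) (n : ℕ) : 1 - q ^ (n+1) * a ∈ slitPlane := by
  rw [Complex.mem_slitPlane_iff]
  left
  have h2 := key_small hq n
  have h3 : |(q ^ (n+1) * a).re| ≤ ‖q ^ (n+1) * a‖ := Complex.abs_re_le_norm _
  have : (1 - q ^ (n+1) * a).re = 1 - (q ^ (n+1) * a).re := by simp
  rw [this]
  have := abs_le.mp h3
  linarith

lemma summable_norm_log {a q : ℂ} (hq : ‖q‖ < rr a) :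
    Summable fun n : ℕ => Complex.log (1 - q ^ (n+1) * a) := by
  apply Summable.of_norm_bounded (g := fun n => (3/2) * (‖q‖^(n+1) * ‖a‖))
  · apply Summable.mul_left
    apply Summable.mul_right
    have h1 : ‖q‖ < 1 := lt_of_lt_of_le hq (le_of_lt (rr_lt_one a))
    exact ((summable_geometric_of_lt_one (norm_nonneg q) h1).mul_left ‖q‖).congr
      (fun n => by ring)
  · intro n
    have h2 := key_small hq n
    have : (1 - q ^ (n+1) * a) = 1 + (-(q ^ (n+1) * a)) := by ring
    rw [this]
    have := Complex.norm_log_one_add_half_le_self (z := -(q ^ (n+1) * a)) (by simpa using h2)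
    simpa [norm_mul, norm_pow] using this

noncomputable def gg (a q : ℂ) : ℂ := ∏' n : ℕ, (1 - q ^ (n + 1) * a)

lemma gg_eq_exp {a q : ℂ} (hq : ‖q‖ < rr a) :
    gg a q = Complex.exp (∑' n : ℕ, Complex.log (1 - q ^ (n+1) * a)) := by
  have := Complex.cexp_tsum_eq_tprod (f := fun n => 1 - q ^ (n+1) * a)
    (fun n => key_ne hq n) (summable_norm_log hq)
  exact this.symm

lemma multipliable_gg {a q : ℂ} (hq : ‖q‖ < rr a) :
    Multipliable fun n : ℕ => (1 - q ^ (n+1) * a) :=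
  Complex.multipliable_of_summable_log (summable_norm_log hq)

lemma hasDerivAt_L (a : ℂ) :
    HasDerivAt (fun q : ℂ => ∑' n : ℕ, Complex.log (1 - q ^ (n+1) * a)) (-a) 0 := by
  have hr := rr_pos a
  have key := hasDerivAt_tsum_of_isPreconnected
    (u := fun n : ℕ => 2*‖a‖*(((n:ℝ)+1) * (rr a)^n))
    (g := fun (n : ℕ) (q : ℂ) => Complex.log (1 - q ^ (n+1) * a))
    (g' := fun (n : ℕ) (q : ℂ) => (-(((n:ℂ)+1) * q ^ n * a)) / (1 - q ^ (n+1) * a))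
    ?hu (isOpen_ball (x := (0:ℂ)) (ε := rr a)) (convex_ball (0:ℂ) (rr a)).isPreconnected
    ?hg ?hg' (mem_ball_self hr) ?hg0 (mem_ball_self hr)
  · have h0 : (∑' n : ℕ, (-(((n:ℂ)+1) * (0:ℂ) ^ n * a)) / (1 - (0:ℂ) ^ (n+1) * a)) = -a := by
      rw [tsum_eq_single 0]
      · norm_num
      · intro n hn
        obtain ⟨m, rfl⟩ := Nat.exists_eq_succ_of_ne_zero hn
        simp [pow_succ]
    rwa [h0] at key
  case hu =>
    apply Summable.mul_left
    have h1 : ‖rr a‖ < 1 := by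
      rw [Real.norm_eq_abs, abs_of_pos hr]; exact rr_lt_one a
    have h2 : Summable fun n : ℕ => (n:ℝ) * (rr a)^n := by
      simpa using summable_pow_mul_geometric_of_norm_lt_one 1 h1
    have h3 : Summable fun n : ℕ => (rr a)^n :=
      summable_geometric_of_lt_one hr.le (rr_lt_one a)
    exact (h2.add h3).congr (fun n => by ring)
  case hg =>
    intro n q hq
    have hq' : ‖q‖ < rr a := by simpa [mem_ball, dist_zero_right] using hq
    have hin : HasDerivAt (fun q : ℂ => 1 - q ^ (n+1) * a) (-(((n:ℂ)+1) * q ^ n * a)) q := by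
      have := ((hasDerivAt_pow (n+1) q).mul_const a).const_sub 1
      simpa [Nat.cast_add] using this
    exact hin.clog (key_slit hq' n)
  case hg' =>
    intro n q hq
    have hq' : ‖q‖ < rr a := by simpa [mem_ball, dist_zero_right] using hq
    rw [norm_div]
    have hnum : ‖-(((n:ℂ)+1) * q ^ n * a)‖ ≤ ((n:ℝ)+1) * (rr a)^n * ‖a‖ := by
      rw [norm_neg, norm_mul, norm_mul, norm_pow]
      have h1 : ‖((n:ℂ)+1)‖ = (n:ℝ)+1 := by
        norm_cast
      rw [h1]
      have h2 : ‖q‖^n ≤ (rr a)^n := pow_le_pow_left₀ (norm_nonneg q) hq'.le n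
      gcongr
    have hden := key_half_le hq' n
    calc ‖-(((n:ℂ)+1) * q ^ n * a)‖ / ‖1 - q ^ (n+1) * a‖
        ≤ (((n:ℝ)+1) * (rr a)^n * ‖a‖) / (1/2) := by
          apply div_le_div₀ (by positivity) hnum (by norm_num) hden
      _ = 2*‖a‖*(((n:ℝ)+1) * (rr a)^n) := by ring
  case hg0 =>
    apply summable_of_ne_finset_zero (s := ∅)
    intro n _
    simp [zero_pow (Nat.succ_ne_zero n)]

lemma gg_hasDeriv (a : ℂ) : HasDerivAt (gg a) (-a) 0 := by
  have hL := (hasDerivAt_L a).cexp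
  have hL0 : (∑' n : ℕ, Complex.log (1 - (0:ℂ) ^ (n+1) * a)) = 0 := by
    have : (fun n : ℕ => Complex.log (1 - (0:ℂ) ^ (n+1) * a)) = fun _ => 0 := by
      funext n
      simp [zero_pow (Nat.succ_ne_zero n)]
    rw [this, tsum_zero]
  rw [hL0, Complex.exp_zero, one_mul] at hL
  apply hL.congr_of_eventuallyEq
  filter_upwards [Metric.ball_mem_nhds (0:ℂ) (rr_pos a)] with q hq
  exact gg_eq_exp (by simpa [mem_ball, dist_zero_right] using hq)

lemma gg_zero (a : ℂ) : gg a 0 = 1 := by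
  rw [gg]
  have : (fun n : ℕ => (1 - (0:ℂ) ^ (n+1) * a)) = fun _ => 1 := by
    funext n
    simp [zero_pow (Nat.succ_ne_zero n)]
  rw [this, tprod_one]
lemma phi_zero (z : ℂ) : phi 0 z = z - 1 := by
  rw [phi]
  have : (fun n : ℕ => ((1 - (0:ℂ) ^ (n+1) * z) * (1 - (0:ℂ) ^ (n+1) * z⁻¹))) = fun _ => 1 := by
    funext n
    simp [zero_pow (Nat.succ_ne_zero n)]
  rw [this, tprod_one, mul_one]

lemma phi_eventually (z : ℂ) :
    (fun q => phi q z) =ᶠ[nhds 0] fun q => (z - 1) * (gg z q * gg z⁻¹ q) := by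
  have hr : 0 < min (rr z) (rr z⁻¹) := lt_min (rr_pos z) (rr_pos z⁻¹)
  filter_upwards [Metric.ball_mem_nhds (0:ℂ) hr] with q hq
  have hq' : ‖q‖ < min (rr z) (rr z⁻¹) := by simpa [mem_ball, dist_zero_right] using hq
  have h1 : ‖q‖ < rr z := lt_of_lt_of_le hq' (min_le_left _ _)
  have h2 : ‖q‖ < rr z⁻¹ := lt_of_lt_of_le hq' (min_le_right _ _)
  rw [phi, Multipliable.tprod_mul (multipliable_gg h1) (multipliable_gg h2)]
  rfl

lemma phi_hasDeriv (z : ℂ) : HasDerivAt (fun q => phi q z) (-((z-1) * (z + z⁻¹))) 0 := by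
  have h := HasDerivAt.const_mul (z-1) ((gg_hasDeriv z).mul (gg_hasDeriv z⁻¹))
  rw [gg_zero, gg_zero] at h
  have h' := h.congr_of_eventuallyEq (phi_eventually z)
  refine h'.congr_deriv ?_
  ring

lemma T_zero : (∏' n : ℕ, (1 - (0:ℂ) ^ (n+1)) ^ 2) = 1 := by
  have : (fun n : ℕ => (1 - (0:ℂ) ^ (n+1)) ^ 2) = fun _ => 1 := by
    funext n
    simp [zero_pow (Nat.succ_ne_zero n)]
  rw [this, tprod_one]

lemma T_eventually :
    (fun q : ℂ => ∏' n : ℕ, (1 - q ^ (n+1)) ^ 2) =ᶠ[nhds 0] fun q => gg 1 q * gg 1 q := by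
  filter_upwards [Metric.ball_mem_nhds (0:ℂ) (rr_pos 1)] with q hq
  have hq' : ‖q‖ < rr 1 := by simpa [mem_ball, dist_zero_right] using hq
  have : (fun n : ℕ => (1 - q ^ (n+1)) ^ 2) = fun n => (1 - q ^ (n+1) * 1) * (1 - q ^ (n+1) * 1) := by
    funext n
    ring
  rw [this, Multipliable.tprod_mul (multipliable_gg hq') (multipliable_gg hq')]
  rfl

lemma T_hasDeriv : HasDerivAt (fun q : ℂ => ∏' n : ℕ, (1 - q ^ (n+1)) ^ 2) (-2) 0 := by
  have h := (gg_hasDeriv 1).mul (gg_hasDeriv 1)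
  rw [gg_zero] at h
  have h' := h.congr_of_eventuallyEq T_eventually
  refine h'.congr_deriv ?_
  ring

lemma del_zero {x y : ℂ} (hx1 : x - 1 ≠ 0) (hy1 : y - 1 ≠ 0) :
    del 0 x y = (x * y - 1) / ((x - 1) * (y - 1)) := by
  rw [del, T_zero, phi_zero, phi_zero, phi_zero, one_mul]

theorem stmt_9 (x y : ℂ) (hx0 : x ≠ 0) (hy0 : y ≠ 0)
    (hx1 : x ≠ 1) (hy1 : y ≠ 1) (hxy : x * y ≠ 1) :
    Filter.Tendsto
      (fun q : ℂ => (del q x y - (x * y - 1) / ((x - 1) * (y - 1))) / q)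
      (nhdsWithin 0 {0}ᶜ) (nhds (x⁻¹ * y⁻¹ - x * y)) := by
  have hx1' : x - 1 ≠ 0 := sub_ne_zero.mpr hx1
  have hy1' : y - 1 ≠ 0 := sub_ne_zero.mpr hy1
  have hxy1' : x * y - 1 ≠ 0 := sub_ne_zero.mpr hxy
  have hden0 : ((fun q => phi q x) 0 * (fun q => phi q y) 0) ≠ 0 := by
    simp only [phi_zero]
    exact mul_ne_zero hx1' hy1'
  have hdel : HasDerivAt (fun q => del q x y) (x⁻¹ * y⁻¹ - x * y) 0 := by
    have h := (T_hasDeriv.mul (phi_hasDeriv (x*y))).div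
      ((phi_hasDeriv x).mul (phi_hasDeriv y)) hden0
    have hfun : (fun q => del q x y) =
        fun q => (∏' n : ℕ, (1 - q ^ (n+1)) ^ 2) * phi q (x*y) / (phi q x * phi q y) := rfl
    rw [hfun]
    refine h.congr_deriv ?_
    symm
    simp only [Pi.mul_apply, phi_zero, T_zero]
    have hxyinv : (x * y)⁻¹ = x⁻¹ * y⁻¹ := by rw [mul_inv]
    field_simp
    ring
  rw [hasDerivAt_iff_tendsto_slope] at hdel
  apply Filter.Tendsto.congr _ hdel
  intro q
  rw [slope_def_field, del_zero hx1' hy1', sub_zero]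
end

section
/- Fix x, y ∈ ℂ \ {0} with x ≠ 1, assume that neither y nor xy is a positive real number, and fix λ ∈ ℝ \ ℤ. Then, as q tends to 0⁺ through real numbers in (0,1), δ_q(x, q^{−λ}y) tends to x^{⌊λ⌋}/(1 − x⁻¹), where ⌊λ⌋ is the integer floor of λ. -/
open scoped BigOperators

set_option maxHeartbeats 1000000

open Filter Complex Topology

lemma aux_multipliable_of_log (g : ℕ → ℂ) (h0 : ∀ n, g n ≠ 0)
    (hs : Summable fun n => Complex.log (g n)) : Multipliable g :=
  Complex.multipliable_of_summable_log hs

lemma aux_tprod_eq_exp (g : ℕ → ℂ) (h0 : ∀ n, g n ≠ 0)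
    (hs : Summable fun n => Complex.log (g n)) :
    ∏' n, g n = Complex.exp (∑' n, Complex.log (g n)) :=
  (Complex.cexp_tsum_eq_tprod h0 hs).symm

lemma aux_summable_log (q : ℝ) (hq0 : 0 ≤ q) (hq1 : q < 1) (a : ℂ) :
    Summable (fun n : ℕ => Complex.log (1 - a * (q : ℂ) ^ n)) := by
  have hgeo : Summable (fun n : ℕ => 3 / 2 * (‖a‖ * q ^ n)) :=
    ((summable_geometric_of_lt_one hq0 hq1).mul_left ‖a‖).mul_left (3 / 2)
  refine Summable.of_norm_bounded_eventually_nat hgeo ?_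
  have htend : Tendsto (fun n : ℕ => ‖a‖ * q ^ n) atTop (𝓝 (‖a‖ * 0)) :=
    (tendsto_pow_atTop_nhds_zero_of_lt_one hq0 hq1).const_mul ‖a‖
  rw [mul_zero] at htend
  filter_upwards [htend.eventually (gt_mem_nhds (by norm_num : (0:ℝ) < 1/2))] with n hn
  have hnorm : ‖-(a * (q : ℂ) ^ n)‖ ≤ 1 / 2 := by
    rw [norm_neg, norm_mul, norm_pow, Complex.norm_real, Real.norm_eq_abs,
      _root_.abs_of_nonneg hq0]
    exact hn.le
  have := Complex.norm_log_one_add_half_le_self hnorm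
  rw [show (1 : ℂ) + -(a * (q:ℂ)^n) = 1 - a * (q:ℂ)^n by ring] at this
  refine this.trans ?_
  rw [norm_neg, norm_mul, norm_pow, Complex.norm_real, Real.norm_eq_abs, _root_.abs_of_nonneg hq0]

lemma aux_factor_ne {z : ℂ} (hz : ∀ r : ℝ, 0 < r → z ≠ r) {c : ℝ} (hc : 0 < c) :
    1 - (c : ℂ) * z ≠ 0 := by
  intro h
  apply hz c⁻¹ (by positivity)
  have hc0 : (c : ℂ) ≠ 0 := by exact_mod_cast hc.ne'
  rw [Complex.ofReal_inv]
  field_simp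
  linear_combination -h

lemma aux_factor_inv_ne {z : ℂ} (hz0 : z ≠ 0) (hz : ∀ r : ℝ, 0 < r → z ≠ r) {c : ℝ}
    (hc : 0 < c) : 1 - (c : ℂ) * z⁻¹ ≠ 0 := by
  intro h
  apply hz c hc
  field_simp at h
  linear_combination h

lemma aux_multipliable (q : ℝ) (hq0 : 0 ≤ q) (hq1 : q < 1) (a : ℂ)
    (h0 : ∀ n : ℕ, 1 - a * (q : ℂ) ^ n ≠ 0) :
    Multipliable (fun n : ℕ => 1 - a * (q : ℂ) ^ n) :=
  aux_multipliable_of_log _ h0 (aux_summable_log q hq0 hq1 a)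
lemma aux_phi_qmul (q : ℝ) (hq0 : 0 < q) (hq1 : q < 1) (z : ℂ) (hz0 : z ≠ 0)
    (hz : ∀ r : ℝ, 0 < r → z ≠ r) :
    phi (q : ℂ) ((q : ℂ) * z) = -z⁻¹ * phi (q : ℂ) z := by
  have hQ0 : (q : ℂ) ≠ 0 := by exact_mod_cast hq0.ne'
  -- nonvanishing of all factors
  have hA : ∀ (j n : ℕ), 1 - ((q : ℂ) ^ j * z) * (q : ℂ) ^ n ≠ 0 := by
    intro j n
    have : ((q : ℂ) ^ j * z) * (q : ℂ) ^ n = ((q ^ (j + n) : ℝ) : ℂ) * z := by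
      push_cast; ring
    rw [this]
    exact aux_factor_ne hz (by positivity)
  have hB : ∀ (j n : ℕ), 1 - ((q : ℂ) ^ j * z⁻¹) * (q : ℂ) ^ n ≠ 0 := by
    intro j n
    have : ((q : ℂ) ^ j * z⁻¹) * (q : ℂ) ^ n = ((q ^ (j + n) : ℝ) : ℂ) * z⁻¹ := by
      push_cast; ring
    rw [this]
    exact aux_factor_inv_ne hz0 hz (by positivity)
  have hB0 : ∀ n : ℕ, 1 - z⁻¹ * (q : ℂ) ^ n ≠ 0 := by
    intro n
    have := hB 0 n
    rwa [pow_zero, one_mul] at this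
  have MA1 : Multipliable (fun n : ℕ => 1 - ((q:ℂ) * z) * (q:ℂ)^n) := by
    have := aux_multipliable q hq0.le hq1 ((q:ℂ) * z) (by simpa [pow_one] using hA 1)
    simpa using this
  have MA2 : Multipliable (fun n : ℕ => 1 - ((q:ℂ)^2 * z) * (q:ℂ)^n) :=
    aux_multipliable q hq0.le hq1 _ (hA 2)
  have MB0 : Multipliable (fun n : ℕ => 1 - z⁻¹ * (q:ℂ)^n) :=
    aux_multipliable q hq0.le hq1 _ hB0
  have MB1 : Multipliable (fun n : ℕ => 1 - ((q:ℂ) * z⁻¹) * (q:ℂ)^n) := by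
    have := aux_multipliable q hq0.le hq1 ((q:ℂ) * z⁻¹) (by simpa [pow_one] using hB 1)
    simpa using this
  set T := ∏' n : ℕ, (1 - ((q:ℂ)^2 * z) * (q:ℂ)^n) with hT
  set S := ∏' n : ℕ, (1 - ((q:ℂ) * z⁻¹) * (q:ℂ)^n) with hS
  -- phi q z
  have hphi1 : phi (q:ℂ) z = (z - 1) * ((1 - (q:ℂ)*z) * T * S) := by
    rw [phi]
    have e1 : ∀ n : ℕ, (1 - (q:ℂ)^(n+1) * z) * (1 - (q:ℂ)^(n+1) * z⁻¹)
        = (1 - ((q:ℂ)*z) * (q:ℂ)^n) * (1 - ((q:ℂ)*z⁻¹) * (q:ℂ)^n) := by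
      intro n; ring
    rw [tprod_congr e1, Multipliable.tprod_mul MA1 MB1]
    have peel : (∏' n : ℕ, (1 - ((q:ℂ)*z) * (q:ℂ)^n)) = (1 - (q:ℂ)*z) * T := by
      have hshift : Multipliable (fun n : ℕ => 1 - ((q:ℂ)*z) * (q:ℂ)^(n+1)) :=
        MA2.congr (fun n => by ring)
      have h1 := tprod_eq_zero_mul' (f := fun n : ℕ => 1 - ((q:ℂ)*z) * (q:ℂ)^n) hshift
      rw [h1]; simp only [pow_zero, mul_one]
      have h2 : (∏' (b : ℕ), (1 - (q:ℂ) * z * (q:ℂ) ^ (b + 1)))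
          = ∏' n : ℕ, (1 - ((q:ℂ)^2 * z) * (q:ℂ)^n) :=
        tprod_congr (fun n => by ring)
      rw [h2]
    rw [peel]
  -- phi q (q z)
  have hphi2 : phi (q:ℂ) ((q:ℂ) * z) = ((q:ℂ)*z - 1) * (T * ((1 - z⁻¹) * S)) := by
    rw [phi]
    have e2 : ∀ n : ℕ, (1 - (q:ℂ)^(n+1) * ((q:ℂ)*z)) * (1 - (q:ℂ)^(n+1) * ((q:ℂ)*z)⁻¹)
        = (1 - ((q:ℂ)^2*z) * (q:ℂ)^n) * (1 - z⁻¹ * (q:ℂ)^n) := by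
      intro n
      congr 1
      · ring
      · congr 1
        rw [mul_inv, pow_succ]
        field_simp
    rw [tprod_congr e2, Multipliable.tprod_mul MA2 MB0]
    have peel : (∏' n : ℕ, (1 - z⁻¹ * (q:ℂ)^n)) = (1 - z⁻¹) * S := by
      have hshift : Multipliable (fun n : ℕ => 1 - z⁻¹ * (q:ℂ)^(n+1)) :=
        MB1.congr (fun n => by ring)
      have h1 := tprod_eq_zero_mul' (f := fun n : ℕ => 1 - z⁻¹ * (q:ℂ)^n) hshift
      rw [h1]; simp only [pow_zero, mul_one]
      have h2 : (∏' (b : ℕ), (1 - z⁻¹ * (q:ℂ) ^ (b + 1)))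
          = ∏' n : ℕ, (1 - ((q:ℂ) * z⁻¹) * (q:ℂ)^n) :=
        tprod_congr (fun n => by ring)
      rw [h2]
    rw [peel]
  rw [hphi1, hphi2]
  field_simp
  ring
lemma aux_del_qmul (q : ℝ) (hq0 : 0 < q) (hq1 : q < 1) (x w : ℂ) (hx0 : x ≠ 0)
    (hw0 : w ≠ 0) (hw : ∀ r : ℝ, 0 < r → w ≠ r) (hxw : ∀ r : ℝ, 0 < r → x * w ≠ r) :
    del (q : ℂ) x ((q : ℂ) * w) = x⁻¹ * del (q : ℂ) x w := by
  have h1 : phi (q:ℂ) (x * ((q:ℂ) * w)) = -(x*w)⁻¹ * phi (q:ℂ) (x * w) := by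
    rw [show x * ((q:ℂ) * w) = (q:ℂ) * (x * w) by ring]
    exact aux_phi_qmul q hq0 hq1 (x*w) (mul_ne_zero hx0 hw0) hxw
  have h2 : phi (q:ℂ) ((q:ℂ) * w) = -w⁻¹ * phi (q:ℂ) w := aux_phi_qmul q hq0 hq1 w hw0 hw
  have hw' : -w⁻¹ ≠ 0 := neg_ne_zero.mpr (inv_ne_zero hw0)
  rw [del, del, h1, h2]
  rw [show (∏' n : ℕ, (1 - (q:ℂ) ^ (n + 1)) ^ 2) * (-(x*w)⁻¹ * phi (q:ℂ) (x*w))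
      = (-w⁻¹) * (x⁻¹ * ((∏' n : ℕ, (1 - (q:ℂ) ^ (n + 1)) ^ 2) * phi (q:ℂ) (x*w))) by
        rw [mul_inv]; ring,
    show phi (q:ℂ) x * (-w⁻¹ * phi (q:ℂ) w) = (-w⁻¹) * (phi (q:ℂ) x * phi (q:ℂ) w) by ring,
    mul_div_mul_left _ _ hw', mul_div_assoc]

lemma aux_del_zpow (q : ℝ) (hq0 : 0 < q) (hq1 : q < 1) (x y : ℂ) (hx0 : x ≠ 0)
    (hy0 : y ≠ 0) (hy : ∀ r : ℝ, 0 < r → y ≠ r) (hxy : ∀ r : ℝ, 0 < r → x * y ≠ r) :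
    ∀ (k : ℤ) (r : ℝ), 0 < r →
      del (q:ℂ) x ((q:ℂ) ^ k * ((r:ℂ) * y)) = (x ^ k)⁻¹ * del (q:ℂ) x ((r:ℂ) * y) := by
  have hQ0 : (q:ℂ) ≠ 0 := by exact_mod_cast hq0.ne'
  have hcy : ∀ c : ℝ, 0 < c → ∀ r : ℝ, 0 < r → (c:ℂ) * y ≠ (r:ℂ) := by
    intro c hc r hr h
    apply hy (r / c) (by positivity)
    have hc0 : (c:ℂ) ≠ 0 := by exact_mod_cast hc.ne'
    push_cast
    field_simp
    linear_combination h
  have hcxy : ∀ c : ℝ, 0 < c → ∀ r : ℝ, 0 < r → x * ((c:ℂ) * y) ≠ (r:ℂ) := by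
    intro c hc r hr h
    apply hxy (r / c) (by positivity)
    have hc0 : (c:ℂ) ≠ 0 := by exact_mod_cast hc.ne'
    push_cast
    field_simp
    linear_combination h
  have hcy0 : ∀ c : ℝ, 0 < c → (c:ℂ) * y ≠ 0 := fun c hc =>
    mul_ne_zero (by exact_mod_cast hc.ne') hy0
  -- a single application of aux_del_qmul in the right shape
  have step : ∀ (k : ℤ) (r : ℝ), 0 < r →
      del (q:ℂ) x ((q:ℂ) * ((q:ℂ) ^ k * ((r:ℂ) * y)))
        = x⁻¹ * del (q:ℂ) x ((q:ℂ) ^ k * ((r:ℂ) * y)) := by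
    intro k r hr
    have hc : (0:ℝ) < q ^ k * r := by positivity
    have hcast : (q:ℂ) ^ k * ((r:ℂ) * y) = (((q ^ k * r : ℝ)):ℂ) * y := by
      push_cast; ring
    rw [hcast, aux_del_qmul q hq0 hq1 x _ hx0 (hcy0 _ hc) (hcy _ hc) (hcxy _ hc)]
  intro k
  induction k using Int.induction_on with
  | zero => intro r hr; simp
  | succ k ih =>
      intro r hr
      have : (q:ℂ) ^ ((k:ℤ) + 1) * ((r:ℂ) * y) = (q:ℂ) * ((q:ℂ) ^ (k:ℤ) * ((r:ℂ) * y)) := by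
        rw [zpow_add_one₀ hQ0]; ring
      rw [this, step k r hr, ih r hr, zpow_add_one₀ hx0, mul_inv]
      ring
  | pred k ih =>
      intro r hr
      have hstep := step (-(k:ℤ) - 1) r hr
      have : (q:ℂ) * ((q:ℂ) ^ (-(k:ℤ) - 1) * ((r:ℂ) * y))
          = (q:ℂ) ^ (-(k:ℤ)) * ((r:ℂ) * y) := by
        rw [show -(k:ℤ) = (-(k:ℤ) - 1) + 1 by ring, zpow_add_one₀ hQ0]; ring
      rw [this, ih r hr] at hstep
      have hD : x ^ ((k:ℤ)+1) * del (↑q) x ((r:ℂ) * y)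
          = x * (x⁻¹ * del (↑q) x ((q:ℂ) ^ (-(k:ℤ) - 1) * ((r:ℂ) * y))) := by
        rw [← hstep, zpow_neg, inv_inv, zpow_add_one₀ hx0]; ring
      rw [show ((x:ℂ) ^ (-(k:ℤ) - 1))⁻¹ = x ^ ((k:ℤ)+1) by
            rw [show (-(k:ℤ)-1) = -((k:ℤ)+1) by ring, zpow_neg, inv_inv],
        hD]
      field_simp
lemma aux_tendsto_tprod_one (u v : ℝ → ℂ)
    (hu : Tendsto u (nhdsWithin 0 (Set.Ioo (0:ℝ) 1)) (𝓝 0))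
    (hv : Tendsto v (nhdsWithin 0 (Set.Ioo (0:ℝ) 1)) (𝓝 0)) :
    Tendsto (fun q : ℝ => ∏' n : ℕ, ((1 - u q * (q:ℂ)^n) * (1 - v q * (q:ℂ)^n)))
      (nhdsWithin 0 (Set.Ioo (0:ℝ) 1)) (𝓝 1) := by
  set F := nhdsWithin (0:ℝ) (Set.Ioo (0:ℝ) 1) with hF
  set g : ℝ → ℕ → ℂ := fun q n => (1 - u q * (q:ℂ)^n) * (1 - v q * (q:ℂ)^n) with hg
  set f : ℝ → ℕ → ℂ := fun q n => Complex.log (g q n) with hf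
  have hEv : ∀ᶠ q in F, (0 < q ∧ q ≤ 1/2) ∧ ‖u q‖ ≤ 1/8 ∧ ‖v q‖ ≤ 1/8 := by
    have h1 : ∀ᶠ q in F, q ∈ Set.Ioo (0:ℝ) 1 := self_mem_nhdsWithin
    have h2 : ∀ᶠ q in F, q < 1/2 :=
      eventually_nhdsWithin_of_eventually_nhds (gt_mem_nhds (by norm_num))
    have hun : Tendsto (fun q => ‖u q‖) F (𝓝 0) := by simpa using hu.norm
    have hvn : Tendsto (fun q => ‖v q‖) F (𝓝 0) := by simpa using hv.norm
    have h3 : ∀ᶠ q in F, ‖u q‖ < 1/8 := hun.eventually (gt_mem_nhds (by norm_num))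
    have h4 : ∀ᶠ q in F, ‖v q‖ < 1/8 := hvn.eventually (gt_mem_nhds (by norm_num))
    filter_upwards [h1, h2, h3, h4] with q hq1 hq2 hq3 hq4
    exact ⟨⟨hq1.1, hq2.le⟩, hq3.le, hq4.le⟩
  have hkey : ∀ q : ℝ, (0 < q ∧ q ≤ 1/2) → ‖u q‖ ≤ 1/8 → ‖v q‖ ≤ 1/8 →
      ∀ n : ℕ, ‖g q n - 1‖ ≤ (1/2)^(n+1) := by
    intro q hq hu8 hv8 n
    have hqn : ‖((q:ℂ))^n‖ ≤ (1/2)^n := by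
      rw [norm_pow, Complex.norm_real, Real.norm_eq_abs, _root_.abs_of_nonneg hq.1.le]
      exact pow_le_pow_left₀ hq.1.le hq.2 n
    have ha : ‖u q * (q:ℂ)^n‖ ≤ (1/8) * (1/2)^n := by
      rw [norm_mul]; exact mul_le_mul hu8 hqn (norm_nonneg _) (by norm_num)
    have hb : ‖v q * (q:ℂ)^n‖ ≤ (1/8) * (1/2)^n := by
      rw [norm_mul]; exact mul_le_mul hv8 hqn (norm_nonneg _) (by norm_num)
    have hexp : g q n - 1 = (u q * (q:ℂ)^n) * (v q * (q:ℂ)^n)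
        - u q * (q:ℂ)^n - v q * (q:ℂ)^n := by
      simp only [hg]; ring
    rw [hexp]
    have h2n : ((1:ℝ)/2)^n ≤ 1 := pow_le_one₀ (by norm_num) (by norm_num)
    calc ‖(u q * (q:ℂ)^n) * (v q * (q:ℂ)^n) - u q * (q:ℂ)^n - v q * (q:ℂ)^n‖
        ≤ ‖(u q * (q:ℂ)^n) * (v q * (q:ℂ)^n)‖ + ‖u q * (q:ℂ)^n‖ + ‖v q * (q:ℂ)^n‖ := by
          refine (norm_sub_le _ _).trans ?_
          gcongr
          exact norm_sub_le _ _
      _ ≤ (1/8 * (1/2)^n) * (1/8 * (1/2)^n) + 1/8 * (1/2)^n + 1/8 * (1/2)^n := by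
          gcongr
          rw [norm_mul]
          exact mul_le_mul ha hb (norm_nonneg _) (by positivity)
      _ ≤ (1/2)^(n+1) := by
          rw [pow_succ]
          nlinarith [pow_nonneg (by norm_num : (0:ℝ) ≤ 1/2) n, h2n]
  have hlog : ∀ q : ℝ, (0 < q ∧ q ≤ 1/2) → ‖u q‖ ≤ 1/8 → ‖v q‖ ≤ 1/8 →
      ∀ n : ℕ, ‖f q n‖ ≤ 3/2 * (1/2)^(n+1) := by
    intro q hq hu8 hv8 n
    have hkn := hkey q hq hu8 hv8 n
    have hhalf : ‖g q n - 1‖ ≤ 1/2 := by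
      refine hkn.trans ?_
      calc ((1:ℝ)/2)^(n+1) ≤ (1/2)^1 :=
            pow_le_pow_of_le_one (by norm_num) (by norm_num) (by omega)
        _ = 1/2 := pow_one _
    have := Complex.norm_log_one_add_half_le_self (z := g q n - 1) hhalf
    rw [show (1:ℂ) + (g q n - 1) = g q n by ring] at this
    refine this.trans ?_
    linarith [hkn]
  have hsum_bound : Summable (fun n : ℕ => (3:ℝ)/2 * (1/2)^(n+1)) :=
    ((summable_geometric_of_lt_one (r := (1:ℝ)/2) (by norm_num) (by norm_num)).mul_left
      ((3:ℝ)/4)).congr (fun n => by ring)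
  have hab : ∀ n : ℕ, Tendsto (fun q => f q n) F (𝓝 0) := by
    intro n
    have hqn : Tendsto (fun q : ℝ => ((q:ℂ))^n) F (𝓝 ((0:ℂ)^n)) := by
      have hc : Continuous fun q : ℝ => ((q:ℂ))^n := Complex.continuous_ofReal.pow n
      simpa using (hc.tendsto (0:ℝ)).mono_left nhdsWithin_le_nhds
    have hgn : Tendsto (fun q => g q n) F (𝓝 1) := by
      have h1 : Tendsto (fun q => u q * (q:ℂ)^n) F (𝓝 (0 * (0:ℂ)^n)) := hu.mul hqn
      have h2 : Tendsto (fun q => v q * (q:ℂ)^n) F (𝓝 (0 * (0:ℂ)^n)) := hv.mul hqn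
      rw [zero_mul] at h1 h2
      have := ((tendsto_const_nhds (x := (1:ℂ))).sub h1).mul
        ((tendsto_const_nhds (x := (1:ℂ))).sub h2)
      simpa using this
    have hcont : ContinuousAt Complex.log 1 :=
      continuousAt_clog (by simp [Complex.mem_slitPlane_iff])
    have := hcont.tendsto.comp hgn
    rwa [Complex.log_one] at this
  have h_bound : ∀ᶠ q in F, ∀ n : ℕ, ‖f q n‖ ≤ 3/2 * (1/2)^(n+1) := by
    filter_upwards [hEv] with q hq
    exact hlog q hq.1 hq.2.1 hq.2.2
  have htsum : Tendsto (fun q => ∑' n, f q n) F (𝓝 (∑' _ : ℕ, (0:ℂ))) :=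
    tendsto_tsum_of_dominated_convergence hsum_bound hab h_bound
  rw [tsum_zero] at htsum
  have hexp : Tendsto (fun q => Complex.exp (∑' n, f q n)) F (𝓝 1) := by
    simpa [Function.comp_def] using (Complex.continuous_exp.tendsto 0).comp htsum
  refine hexp.congr' ?_
  filter_upwards [hEv] with q hq
  have h0 : ∀ n, g q n ≠ 0 := by
    intro n hzero
    have hkn := hkey q hq.1 hq.2.1 hq.2.2 n
    rw [hzero] at hkn
    simp only [zero_sub, norm_neg, norm_one] at hkn
    have : ((1:ℝ)/2)^(n+1) ≤ 1/2 := by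
      calc ((1:ℝ)/2)^(n+1) ≤ (1/2)^1 :=
            pow_le_pow_of_le_one (by norm_num) (by norm_num) (by omega)
        _ = 1/2 := pow_one _
    linarith
  have hs : Summable (fun n => Complex.log (g q n)) :=
    Summable.of_norm_bounded hsum_bound (hlog q hq.1 hq.2.1 hq.2.2)
  exact (aux_tprod_eq_exp (g q) h0 hs).symm
lemma aux_tendsto_rpow (a : ℝ) (ha : 0 < a) :
    Tendsto (fun q : ℝ => ((q ^ a : ℝ) : ℂ)) (nhdsWithin 0 (Set.Ioo (0:ℝ) 1)) (𝓝 0) := by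
  have h1 : Tendsto (fun q : ℝ => q ^ a) (𝓝 0) (𝓝 0) := by
    have := (Real.continuousAt_rpow_const 0 a (Or.inr ha.le)).tendsto
    rwa [Real.zero_rpow ha.ne'] at this
  have h2 : Tendsto (fun q : ℝ => q ^ a) (nhdsWithin 0 (Set.Ioo (0:ℝ) 1)) (𝓝 0) :=
    h1.mono_left nhdsWithin_le_nhds
  have h3 := (Complex.continuous_ofReal.tendsto 0).comp h2
  rwa [Complex.ofReal_zero] at h3

lemma aux_tendsto_cast : Tendsto (fun q : ℝ => (q:ℂ))
    (nhdsWithin 0 (Set.Ioo (0:ℝ) 1)) (𝓝 0) := by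
  have h := (Complex.continuous_ofReal.tendsto 0).mono_left
    (nhdsWithin_le_nhds (s := Set.Ioo (0:ℝ) 1))
  rwa [Complex.ofReal_zero] at h

lemma aux_rpow_shift (q : ℝ) (hq : 0 < q) (a b : ℝ) (hab : a + 1 = b) (n : ℕ) :
    ((q:ℂ))^(n+1) * ((q ^ a : ℝ) : ℂ) = ((q ^ b : ℝ) : ℂ) * ((q:ℂ))^n := by
  have hr : (q:ℝ)^(n+1) * q^a = q^b * q^n := by
    rw [← Real.rpow_natCast q (n+1), ← Real.rpow_natCast q n, ← Real.rpow_add hq,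
      ← Real.rpow_add hq]
    congr 1
    push_cast
    linarith
  calc ((q:ℂ))^(n+1) * ((q ^ a : ℝ) : ℂ) = (((q:ℝ)^(n+1) * q^a : ℝ) : ℂ) := by push_cast; ring
    _ = (((q:ℝ)^b * q^n : ℝ) : ℂ) := by rw [hr]
    _ = ((q ^ b : ℝ) : ℂ) * ((q:ℂ))^n := by push_cast; ring

lemma aux_factor_shift (q : ℝ) (hq : 0 < q) (mu : ℝ) (z : ℂ) (n : ℕ) :
    (1 - ((q ^ (1-mu) : ℝ) : ℂ) * z * (q:ℂ)^n) * (1 - ((q ^ (1+mu) : ℝ) : ℂ) * z⁻¹ * (q:ℂ)^n)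
      = (1 - (q:ℂ)^(n+1) * (((q ^ (-mu) : ℝ) : ℂ) * z))
        * (1 - (q:ℂ)^(n+1) * (((q ^ (-mu) : ℝ) : ℂ) * z)⁻¹) := by
  have h1 := aux_rpow_shift q hq (-mu) (1-mu) (by ring) n
  have h2 := aux_rpow_shift q hq mu (1+mu) (by ring) n
  have hinv : ((((q ^ (-mu) : ℝ)) : ℂ) * z)⁻¹ = ((q ^ mu : ℝ) : ℂ) * z⁻¹ := by
    rw [mul_inv, ← Complex.ofReal_inv, ← Real.rpow_neg hq.le, neg_neg]
  rw [hinv]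
  congr 1
  · calc 1 - ((q ^ (1-mu) : ℝ) : ℂ) * z * (q:ℂ)^n
        = 1 - ((q:ℂ)^(n+1) * ((q ^ (-mu) : ℝ):ℂ)) * z := by rw [h1]; ring
      _ = 1 - (q:ℂ)^(n+1) * (((q ^ (-mu) : ℝ):ℂ) * z) := by ring
  · calc 1 - ((q ^ (1+mu) : ℝ) : ℂ) * z⁻¹ * (q:ℂ)^n
        = 1 - ((q:ℂ)^(n+1) * ((q ^ mu : ℝ):ℂ)) * z⁻¹ := by rw [h2]; ring
      _ = 1 - (q:ℂ)^(n+1) * (((q ^ mu : ℝ):ℂ) * z⁻¹) := by ring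

lemma aux_main_mu (x y : ℂ) (hx0 : x ≠ 0) (hy0 : y ≠ 0) (hx1 : x ≠ 1)
    (mu : ℝ) (hmu0 : 0 < mu) (hmu1 : mu < 1) :
    Tendsto (fun q : ℝ => del (q:ℂ) x (((q ^ (-mu) : ℝ) : ℂ) * y))
      (nhdsWithin 0 (Set.Ioo (0:ℝ) 1)) (𝓝 (x / (x - 1))) := by
  set F := nhdsWithin (0:ℝ) (Set.Ioo (0:ℝ) 1) with hFdef
  set w : ℝ → ℂ := fun q => ((q ^ (-mu) : ℝ) : ℂ) * y with hw
  set c : ℝ → ℂ := fun q => ((q ^ mu : ℝ) : ℂ) with hc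
  set Pp : ℝ → ℂ := fun q => ∏' n : ℕ, (1 - (q:ℂ)^(n+1))^2 with hPpdef
  set Ax : ℝ → ℂ := fun q => ∏' n : ℕ, ((1 - (q:ℂ)^(n+1) * x) * (1 - (q:ℂ)^(n+1) * x⁻¹)) with hAx
  set Axy : ℝ → ℂ := fun q =>
    ∏' n : ℕ, ((1 - (q:ℂ)^(n+1) * (x * w q)) * (1 - (q:ℂ)^(n+1) * (x * w q)⁻¹)) with hAxy
  set Ay : ℝ → ℂ := fun q =>
    ∏' n : ℕ, ((1 - (q:ℂ)^(n+1) * w q) * (1 - (q:ℂ)^(n+1) * (w q)⁻¹)) with hAy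
  -- limits of the pieces
  have hPp1 : Tendsto Pp F (𝓝 1) := by
    refine Tendsto.congr (fun q => ?_)
      (aux_tendsto_tprod_one (fun q => (q:ℂ)) (fun q => (q:ℂ)) aux_tendsto_cast aux_tendsto_cast)
    exact tprod_congr fun n => by ring
  have hAx1 : Tendsto Ax F (𝓝 1) := by
    have hu : Tendsto (fun q : ℝ => (q:ℂ) * x) F (𝓝 0) := by
      have h := aux_tendsto_cast.mul_const x; rwa [zero_mul] at h
    have hv : Tendsto (fun q : ℝ => (q:ℂ) * x⁻¹) F (𝓝 0) := by
      have h := aux_tendsto_cast.mul_const x⁻¹; rwa [zero_mul] at h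
    refine Tendsto.congr (fun q => ?_) (aux_tendsto_tprod_one _ _ hu hv)
    exact tprod_congr fun n => by ring
  have hAy1 : Tendsto Ay F (𝓝 1) := by
    have hu : Tendsto (fun q : ℝ => ((q ^ (1-mu) : ℝ) : ℂ) * y) F (𝓝 0) := by
      have h := (aux_tendsto_rpow (1-mu) (by linarith)).mul_const y
      rwa [zero_mul] at h
    have hv : Tendsto (fun q : ℝ => ((q ^ (1+mu) : ℝ) : ℂ) * y⁻¹) F (𝓝 0) := by
      have h := (aux_tendsto_rpow (1+mu) (by linarith)).mul_const y⁻¹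
      rwa [zero_mul] at h
    refine (aux_tendsto_tprod_one _ _ hu hv).congr' ?_
    filter_upwards [self_mem_nhdsWithin] with q hq
    refine tprod_congr fun n => ?_
    simp only [hw]
    exact aux_factor_shift q hq.1 mu y n
  have hAxy1 : Tendsto Axy F (𝓝 1) := by
    have hu : Tendsto (fun q : ℝ => ((q ^ (1-mu) : ℝ) : ℂ) * (x*y)) F (𝓝 0) := by
      have h := (aux_tendsto_rpow (1-mu) (by linarith)).mul_const (x*y)
      rwa [zero_mul] at h
    have hv : Tendsto (fun q : ℝ => ((q ^ (1+mu) : ℝ) : ℂ) * (x*y)⁻¹) F (𝓝 0) := by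
      have h := (aux_tendsto_rpow (1+mu) (by linarith)).mul_const (x*y)⁻¹
      rwa [zero_mul] at h
    refine (aux_tendsto_tprod_one _ _ hu hv).congr' ?_
    filter_upwards [self_mem_nhdsWithin] with q hq
    refine tprod_congr fun n => ?_
    have hxw : x * w q = ((q ^ (-mu) : ℝ) : ℂ) * (x * y) := by simp only [hw]; ring
    rw [hxw]
    exact aux_factor_shift q hq.1 mu (x*y) n
  have hc0 : Tendsto c F (𝓝 0) := aux_tendsto_rpow mu hmu0
  -- eventual rewriting of del
  have hev : ∀ᶠ (q : ℝ) in F, del (q:ℂ) x (w q)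
      = (Pp q * ((x*y - c q) * Axy q)) / (((x-1) * Ax q) * ((y - c q) * Ay q)) := by
    filter_upwards [self_mem_nhdsWithin] with q hq
    have hq0 : 0 < q := hq.1
    have hcq : c q ≠ 0 := by
      simp only [hc, ne_eq, Complex.ofReal_eq_zero]
      exact (Real.rpow_pos_of_pos hq0 mu).ne'
    have hsc : w q * c q = y := by
      simp only [hw, hc]
      rw [mul_comm ((q ^ (-mu) : ℝ) : ℂ) y, mul_assoc, ← Complex.ofReal_mul,
        ← Real.rpow_add hq0]
      norm_num
    have hdel : del (q:ℂ) x (w q)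
        = (Pp q * ((x * w q - 1) * Axy q)) / (((x-1) * Ax q) * ((w q - 1) * Ay q)) := rfl
    rw [hdel, ← mul_div_mul_right (Pp q * ((x * w q - 1) * Axy q))
      (((x-1) * Ax q) * ((w q - 1) * Ay q)) hcq]
    congr 1
    · linear_combination (Pp q * Axy q * x) * hsc
    · linear_combination ((x-1) * Ax q * Ay q) * hsc
  -- the limit
  have hnum : Tendsto (fun q => Pp q * ((x*y - c q) * Axy q)) F (𝓝 (1 * ((x*y - 0) * 1))) :=
    hPp1.mul (((tendsto_const_nhds (x := x*y)).sub hc0).mul hAxy1)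
  have hden : Tendsto (fun q => ((x-1) * Ax q) * ((y - c q) * Ay q)) F
      (𝓝 (((x-1) * 1) * ((y - 0) * 1))) :=
    (((tendsto_const_nhds (x := x-1)).mul hAx1)).mul
      (((tendsto_const_nhds (x := y)).sub hc0).mul hAy1)
  have hdne : ((x-1) * 1) * ((y - 0) * 1) ≠ 0 := by
    simp only [mul_one, sub_zero]
    exact mul_ne_zero (sub_ne_zero.mpr hx1) hy0
  have hev' : (fun q : ℝ => (Pp q * ((x*y - c q) * Axy q)) / (((x-1) * Ax q) * ((y - c q) * Ay q)))
      =ᶠ[F] (fun q : ℝ => del (q:ℂ) x (w q)) := by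
    filter_upwards [hev] with q hq using hq.symm
  have := (hnum.div hden hdne).congr' hev'
  have hlim : (1 * ((x*y - 0) * 1)) / (((x-1) * 1) * ((y - 0) * 1)) = x / (x-1) := by
    rw [mul_one, sub_zero, mul_one, mul_one, sub_zero, one_mul]
    rw [mul_comm x y, mul_comm (x-1) y, mul_div_mul_left _ _ hy0]
  rw [hlim] at this
  exact this
theorem stmt_10 (x y : ℂ) (hx0 : x ≠ 0) (hy0 : y ≠ 0) (hx1 : x ≠ 1)
    (hy : ∀ r : ℝ, 0 < r → y ≠ (r : ℂ))
    (hxy : ∀ r : ℝ, 0 < r → x * y ≠ (r : ℂ))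
    (lam : ℝ) (hlam : ∀ m : ℤ, (m : ℝ) ≠ lam) :
    Filter.Tendsto
      (fun q : ℝ => del (q : ℂ) x (((Real.rpow q (-lam) : ℝ) : ℂ) * y))
      (nhdsWithin 0 (Set.Ioo (0 : ℝ) 1))
      (nhds (x ^ (⌊lam⌋ : ℤ) / (1 - x⁻¹))) := by
  set F := nhdsWithin (0:ℝ) (Set.Ioo (0:ℝ) 1) with hFdef
  set m : ℤ := ⌊lam⌋ with hm
  set mu : ℝ := lam - (m : ℝ) with hmu
  have hmu0 : 0 < mu := by
    have h1 : (m : ℝ) ≤ lam := Int.floor_le lam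
    have h2 : (m : ℝ) ≠ lam := hlam m
    have := lt_of_le_of_ne h1 h2
    simp only [hmu]; linarith
  have hmu1 : mu < 1 := by
    have := Int.lt_floor_add_one lam
    simp only [hmu]; push_cast at this ⊢; linarith
  have hmain := aux_main_mu x y hx0 hy0 hx1 mu hmu0 hmu1
  have hev : ∀ᶠ (q : ℝ) in F, x ^ m * del (q:ℂ) x (((q ^ (-mu) : ℝ) : ℂ) * y)
      = del (q:ℂ) x (((q ^ (-lam) : ℝ) : ℂ) * y) := by
    filter_upwards [self_mem_nhdsWithin] with q hq
    have hq0 : 0 < q := hq.1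
    have hq1 : q < 1 := hq.2
    have hr : (q ^ (-lam) : ℝ) = q ^ ((-m : ℤ) : ℝ) * q ^ (-mu) := by
      rw [← Real.rpow_add hq0]
      congr 1
      simp only [hmu]
      push_cast
      ring
    have hsplit : ((q ^ (-lam) : ℝ) : ℂ) * y
        = (q:ℂ) ^ (-m : ℤ) * (((q ^ (-mu) : ℝ) : ℂ) * y) := by
      rw [hr, Real.rpow_intCast]
      push_cast
      ring
    rw [hsplit, aux_del_zpow q hq0 hq1 x y hx0 hy0 hy hxy (-m) (q ^ (-mu))
      (Real.rpow_pos_of_pos hq0 _), zpow_neg, inv_inv]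
  have hx1' : x - 1 ≠ 0 := sub_ne_zero.mpr hx1
  have hinv1 : (1 : ℂ) - x⁻¹ ≠ 0 := by
    rw [sub_ne_zero]
    intro h
    exact hx1 (by rw [← inv_inv x, ← h, inv_one])
  have hone : x / (x - 1) * (1 - x⁻¹) = 1 := by field_simp
  have hfinal : x ^ m * (x / (x - 1)) = x ^ m / (1 - x⁻¹) := by
    rw [eq_div_iff hinv1, mul_assoc, hone, mul_one]
  have hlim : Tendsto (fun q : ℝ => x ^ m * del (q:ℂ) x (((q ^ (-mu) : ℝ) : ℂ) * y)) F
      (𝓝 (x ^ m * (x / (x - 1)))) := hmain.const_mul (x ^ m)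
  rw [hfinal] at hlim
  exact hlim.congr' hev
end

section
/- Fix x, y ∈ ℂ \ {0} with x ≠ 1, y ≠ 1 and xy ≠ 1, and fix m ∈ ℤ. Then, as q tends to 0⁺ through real numbers in (0,1), δ_q(x, q^{−m}y) tends to x^m·(xy − 1)/((x − 1)(y − 1)). -/
open scoped BigOperators

open Complex Filter

/-! ### Auxiliary lemmas -/

lemma aux_ne {u : ℂ} (h : ‖u‖ ≤ 1/2) : 1 - u ≠ 0 := by
  intro h0
  rw [sub_eq_zero] at h0
  rw [← h0] at h
  norm_num at h

lemma aux_log {u : ℂ} (h : ‖u‖ ≤ 1/2) : ‖Complex.log (1 - u)‖ ≤ 3/2 * ‖u‖ := by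
  have := Complex.norm_log_one_add_half_le_self (z := -u) (by rwa [norm_neg])
  rw [← sub_eq_add_neg, norm_neg] at this
  exact this

/-- Master estimate: products of `1 - u n` with geometrically decaying `u`. -/
lemma aux_main (u : ℕ → ℂ) (c r : ℝ) (hc : c ≤ 1/2) (hr0 : 0 ≤ r) (hr : r < 1)
    (hb : ∀ n, ‖u n‖ ≤ c * r ^ n) :
    HasProd (fun n => 1 - u n) (Complex.exp (∑' n, Complex.log (1 - u n))) ∧
      ‖∑' n, Complex.log (1 - u n)‖ ≤ 3/2 * c / (1 - r) := by
  have hc0 : 0 ≤ c := le_trans (norm_nonneg (u 0)) (by simpa using hb 0)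
  have hu : ∀ n, ‖u n‖ ≤ 1/2 := by
    intro n
    refine (hb n).trans ?_
    have h1 : r ^ n ≤ 1 := pow_le_one₀ hr0 hr.le
    nlinarith
  have hne : ∀ n, 1 - u n ≠ 0 := fun n => aux_ne (hu n)
  have hlog : ∀ n, ‖Complex.log (1 - u n)‖ ≤ 3/2 * c * r ^ n := by
    intro n
    refine (aux_log (hu n)).trans ?_
    have := hb n
    nlinarith
  have hgeo : Summable (fun n : ℕ => 3/2 * c * r ^ n) :=
    (summable_geometric_of_lt_one hr0 hr).mul_left _
  have hsum : Summable (fun n => Complex.log (1 - u n)) :=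
    Summable.of_norm_bounded hgeo hlog
  constructor
  · have h := hsum.hasSum.cexp
    have he : (cexp ∘ fun n => Complex.log (1 - u n)) = fun n => 1 - u n :=
      funext fun n => Complex.exp_log (hne n)
    rwa [he] at h
  · calc ‖∑' n, Complex.log (1 - u n)‖ ≤ ∑' n, ‖Complex.log (1 - u n)‖ :=
          norm_tsum_le_tsum_norm (hsum.norm)
      _ ≤ ∑' n : ℕ, 3/2 * c * r ^ n := Summable.tsum_le_tsum hlog hsum.norm hgeo
      _ = 3/2 * c / (1 - r) := by
          rw [tsum_mul_left, tsum_geometric_of_lt_one hr0 hr]; ring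

/-- Multipliability of `∏ (1 - q^(n+1) w)` for `‖q‖ < 1`. -/
lemma aux_mult (q w : ℂ) (hq : ‖q‖ < 1) :
    Multipliable (fun n : ℕ => 1 - q ^ (n + 1) * w) := by
  obtain ⟨k, hk⟩ : ∃ k : ℕ, ‖q‖ ^ k < (1/2) / (‖w‖ + 1) := by
    refine exists_pow_lt_of_lt_one ?_ hq
    positivity
  have hw1 : (0:ℝ) < ‖w‖ + 1 := by positivity
  have hck : ‖q‖ ^ k * (‖w‖ + 1) ≤ 1/2 := by
    rw [← le_div_iff₀ hw1]
    exact hk.le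
  apply Multipliable.comp_nat_add (k := k)
  have := (aux_main (fun n => q ^ (n + k + 1) * w) (‖q‖ ^ k * (‖w‖ + 1)) ‖q‖
    hck (norm_nonneg q) hq ?_).1.multipliable
  · exact this.congr fun n => by ring_nf
  · intro n
    have h1 : ‖q ^ (n + k + 1) * w‖ = ‖q‖ ^ (n + k + 1) * ‖w‖ := by
      rw [norm_mul, norm_pow]
    rw [h1]
    have h2 : ‖q‖ ^ (n + k + 1) = ‖q‖ ^ k * ‖q‖ ^ n * ‖q‖ := by ring
    rw [h2]
    have h5 : ‖q‖ * ‖w‖ ≤ ‖w‖ + 1 := by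
      nlinarith [norm_nonneg q, norm_nonneg w]
    calc ‖q‖ ^ k * ‖q‖ ^ n * ‖q‖ * ‖w‖ = ‖q‖ ^ k * ‖q‖ ^ n * (‖q‖ * ‖w‖) := by ring
      _ ≤ ‖q‖ ^ k * ‖q‖ ^ n * (‖w‖ + 1) := by
          apply mul_le_mul_of_nonneg_left h5 (by positivity)
      _ = ‖q‖ ^ k * (‖w‖ + 1) * ‖q‖ ^ n := by ring

/-- The limit of each elementary product as `q → 0⁺`. -/
lemma aux_tendsto (w : ℂ) :
    Tendsto (fun q : ℝ => ∏' n : ℕ, (1 - (q:ℂ) ^ (n + 1) * w))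
      (nhdsWithin 0 (Set.Ioo (0:ℝ) 1)) (nhds 1) := by
  set S : ℝ → ℂ := fun q => ∑' n : ℕ, Complex.log (1 - (q:ℂ) ^ (n + 1) * w) with hS
  set ε : ℝ := min (1/2) ((1/2) / (‖w‖ + 1)) with hε
  have hε0 : 0 < ε := by
    apply lt_min (by norm_num)
    positivity
  have hmem : Set.Iio ε ∈ nhdsWithin (0:ℝ) (Set.Ioo (0:ℝ) 1) :=
    nhdsWithin_le_nhds (Iio_mem_nhds hε0)
  have key : ∀ q : ℝ, q ∈ Set.Ioo (0:ℝ) 1 → q < ε →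
      HasProd (fun n : ℕ => 1 - (q:ℂ) ^ (n + 1) * w) (Complex.exp (S q)) ∧
        ‖S q‖ ≤ 3 * (‖w‖ + 1) * q := by
    intro q hq hqε
    have hq0 : 0 < q := hq.1
    have hq2 : q ≤ 1/2 := le_of_lt (lt_of_lt_of_le hqε (min_le_left _ _))
    have hqw : q * (‖w‖ + 1) ≤ 1/2 := by
      have h1 : q < (1/2) / (‖w‖ + 1) := lt_of_lt_of_le hqε (min_le_right _ _)
      have hw1 : (0:ℝ) < ‖w‖ + 1 := by positivity
      rw [lt_div_iff₀ hw1] at h1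
      exact h1.le
    have hb : ∀ n : ℕ, ‖(q:ℂ) ^ (n + 1) * w‖ ≤ (q * (‖w‖ + 1)) * q ^ n := by
      intro n
      rw [norm_mul, norm_pow, Complex.norm_real, Real.norm_eq_abs, abs_of_pos hq0]
      have : q ^ (n + 1) = q * q ^ n := by ring
      rw [this]
      have h3 : ‖w‖ ≤ ‖w‖ + 1 := by linarith
      have h4 : (0:ℝ) ≤ q ^ n := by positivity
      nlinarith
    have := aux_main (fun n => (q:ℂ) ^ (n + 1) * w) (q * (‖w‖ + 1)) q hqw hq0.le hq.2 hb
    refine ⟨this.1, this.2.trans ?_⟩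
    have h1q : (1:ℝ) - q ≥ 1/2 := by linarith
    have hnum : (0:ℝ) ≤ 3/2 * (q * (‖w‖ + 1)) := by positivity
    calc 3/2 * (q * (‖w‖ + 1)) / (1 - q) ≤ 3/2 * (q * (‖w‖ + 1)) / (1/2) := by
          apply div_le_div_of_nonneg_left hnum (by norm_num) h1q
      _ = 3 * (‖w‖ + 1) * q := by ring
  have hSbound : ∀ᶠ q in nhdsWithin (0:ℝ) (Set.Ioo (0:ℝ) 1), ‖S q‖ ≤ 3 * (‖w‖ + 1) * q := by
    filter_upwards [hmem, self_mem_nhdsWithin] with q h1 h2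
    exact (key q h2 h1).2
  have hS0 : Tendsto S (nhdsWithin 0 (Set.Ioo (0:ℝ) 1)) (nhds 0) := by
    apply squeeze_zero_norm' hSbound
    have h1 : Tendsto (fun q : ℝ => 3 * (‖w‖ + 1) * q) (nhds 0) (nhds (3 * (‖w‖ + 1) * 0)) :=
      Tendsto.const_mul _ tendsto_id
    rw [mul_zero] at h1
    exact h1.mono_left nhdsWithin_le_nhds
  have hexp : Tendsto (fun q : ℝ => Complex.exp (S q))
      (nhdsWithin 0 (Set.Ioo (0:ℝ) 1)) (nhds 1) := by
    have := (Complex.continuous_exp.tendsto 0).comp hS0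
    simpa [Function.comp_def] using this
  apply hexp.congr'
  filter_upwards [hmem, self_mem_nhdsWithin] with q h1 h2
  exact ((key q h2 h1).1.tprod_eq).symm

/-- Factorization of `phi` into two separate products. -/
lemma phi_eq (q z : ℂ) (hq : ‖q‖ < 1) :
    phi q z = (z - 1) * ((∏' n : ℕ, (1 - q ^ (n + 1) * z)) *
      (∏' n : ℕ, (1 - q ^ (n + 1) * z⁻¹))) := by
  unfold phi
  rw [Multipliable.tprod_mul (aux_mult q z hq) (aux_mult q z⁻¹ hq)]

lemma E_eq (q : ℂ) (hq : ‖q‖ < 1) :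
    (∏' n : ℕ, (1 - q ^ (n + 1)) ^ 2) =
      (∏' n : ℕ, (1 - q ^ (n + 1) * 1)) * (∏' n : ℕ, (1 - q ^ (n + 1) * 1)) := by
  rw [← Multipliable.tprod_mul (aux_mult q 1 hq) (aux_mult q 1 hq)]
  exact tprod_congr fun n => by ring

/-- Quasi-periodicity: `φ_q(qz) = -z⁻¹ φ_q(z)`. -/
lemma phi_step (q z : ℂ) (hq : ‖q‖ < 1) (hq0 : q ≠ 0) (hz : z ≠ 0) :
    phi q (q * z) = -z⁻¹ * phi q z := by
  have hA2 : Multipliable (fun n : ℕ => 1 - q ^ (n + 1) * (q * z)) := aux_mult q (q * z) hq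
  have hB : Multipliable (fun n : ℕ => 1 - q ^ (n + 1) * z⁻¹) := aux_mult q z⁻¹ hq
  have hG : Multipliable (fun n : ℕ => 1 - q ^ n * z⁻¹) := by
    apply Multipliable.comp_nat_add (k := 1)
    exact hB.congr fun n => rfl
  have key : ∀ n : ℕ, (1 - q ^ (n + 1) * (q * z)) * (1 - q ^ (n + 1) * (q * z)⁻¹)
      = (1 - q ^ (n + 1) * (q * z)) * (1 - q ^ n * z⁻¹) := by
    intro n
    congr 1
    rw [mul_inv, pow_succ]
    field_simp
  have lhs_eq : phi q (q * z) = (q * z - 1) *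
      ((∏' n : ℕ, (1 - q ^ (n + 1) * (q * z))) * (∏' n : ℕ, (1 - q ^ n * z⁻¹))) := by
    unfold phi
    rw [tprod_congr key, Multipliable.tprod_mul hA2 hG]
  have hAtail : Multipliable (fun n : ℕ => 1 - q ^ (n + 1 + 1) * z) := by
    refine hA2.congr fun n => ?_
    rw [pow_succ]
    ring
  have split_A : (∏' n : ℕ, (1 - q ^ (n + 1) * z)) =
      (1 - q ^ (0 + 1) * z) * ∏' n : ℕ, (1 - q ^ (n + 1 + 1) * z) :=
    tprod_eq_zero_mul' hAtail
  have split_G : (∏' n : ℕ, (1 - q ^ n * z⁻¹)) =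
      (1 - q ^ 0 * z⁻¹) * ∏' n : ℕ, (1 - q ^ (n + 1) * z⁻¹) :=
    tprod_eq_zero_mul' (hB.congr fun n => rfl)
  have conv : (∏' n : ℕ, (1 - q ^ (n + 1) * (q * z))) =
      ∏' n : ℕ, (1 - q ^ (n + 1 + 1) * z) := by
    refine tprod_congr fun n => ?_
    rw [pow_succ]
    ring
  rw [lhs_eq, conv, split_G, phi_eq q z hq, split_A]
  simp only [pow_zero, pow_one, zero_add, pow_succ]
  field_simp
  ring

/-- One functional-equation step for `del`. -/
lemma del_step (q x y : ℂ) (hq : ‖q‖ < 1) (hq0 : q ≠ 0) (hx : x ≠ 0) (hy : y ≠ 0) :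
    del q x (q * y) = x⁻¹ * del q x y := by
  unfold del
  rw [show x * (q * y) = q * (x * y) by ring,
    phi_step q (x * y) hq hq0 (mul_ne_zero hx hy), phi_step q y hq hq0 hy]
  set E := ∏' n : ℕ, (1 - q ^ (n + 1)) ^ 2
  set A := phi q (x * y)
  set X := phi q x
  set Y := phi q y
  have h1 : E * (-(x * y)⁻¹ * A) = (-y⁻¹) * (x⁻¹ * (E * A)) := by
    rw [mul_inv]
    ring
  have h2 : X * (-y⁻¹ * Y) = (-y⁻¹) * (X * Y) := by ring
  rw [h1, h2, mul_div_mul_left _ _ (neg_ne_zero.2 (inv_ne_zero hy)), mul_div_assoc]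

/-- Iterated functional equation. -/
lemma del_shift (q x y : ℂ) (hq : ‖q‖ < 1) (hq0 : q ≠ 0) (hx : x ≠ 0) (hy : y ≠ 0) (m : ℤ) :
    del q x (q ^ (-m) * y) = x ^ m * del q x y := by
  have step_up : ∀ w : ℂ, w ≠ 0 → del q x (q⁻¹ * w) = x * del q x w := by
    intro w hw
    have h := del_step q x (q⁻¹ * w) hq hq0 hx (mul_ne_zero (inv_ne_zero hq0) hw)
    rw [show q * (q⁻¹ * w) = w by field_simp] at h
    rw [h, ← mul_assoc, mul_inv_cancel₀ hx, one_mul]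
  induction m using Int.induction_on with
  | zero => simp
  | succ k ih =>
      have hk : (q:ℂ) ^ (-(k:ℤ)) * y ≠ 0 := mul_ne_zero (zpow_ne_zero _ hq0) hy
      rw [show (-((k:ℤ) + 1)) = (-1) + (-(k:ℤ)) by ring, zpow_add₀ hq0, zpow_neg_one,
        mul_assoc, step_up _ hk, ih,
        show ((k:ℤ) + 1) = 1 + (k:ℤ) by ring, zpow_add₀ hx, zpow_one, mul_assoc]
  | pred k ih =>
      have hk : (q:ℂ) ^ ((k:ℤ)) * y ≠ 0 := mul_ne_zero (zpow_ne_zero _ hq0) hy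
      have h := del_step q x ((q:ℂ) ^ ((k:ℤ)) * y) hq hq0 hx hk
      rw [show (-(-(k:ℤ) - 1)) = 1 + (k:ℤ) by ring, zpow_add₀ hq0, zpow_one, mul_assoc, h,
        show ((q:ℂ) ^ ((k:ℤ)) * y) = q ^ (-(-(k:ℤ))) * y by norm_num, ih,
        show (-(k:ℤ) - 1) = (-1) + (-(k:ℤ)) by ring, zpow_add₀ hx, zpow_neg_one, mul_assoc]

theorem stmt_11 (x y : ℂ) (hx0 : x ≠ 0) (hy0 : y ≠ 0)
    (hx1 : x ≠ 1) (hy1 : y ≠ 1) (hxy : x * y ≠ 1) (m : ℤ) :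
    Filter.Tendsto
      (fun q : ℝ => del (q : ℂ) x ((q : ℂ) ^ (-m) * y))
      (nhdsWithin 0 (Set.Ioo (0 : ℝ) 1))
      (nhds (x ^ m * (x * y - 1) / ((x - 1) * (y - 1)))) := by
  have hx1' : x - 1 ≠ 0 := sub_ne_zero.2 hx1
  have hy1' : y - 1 ≠ 0 := sub_ne_zero.2 hy1
  have hqprop : ∀ q : ℝ, q ∈ Set.Ioo (0:ℝ) 1 → ‖(q:ℂ)‖ < 1 ∧ (q:ℂ) ≠ 0 := by
    intro q hq
    constructor
    · rw [Complex.norm_real, Real.norm_eq_abs, abs_of_pos hq.1]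
      exact hq.2
    · exact_mod_cast ne_of_gt hq.1
  -- limit of `del q x y`
  have Hdel : Tendsto (fun q : ℝ => del (q:ℂ) x y) (nhdsWithin 0 (Set.Ioo (0:ℝ) 1))
      (nhds ((x * y - 1) / ((x - 1) * (y - 1)))) := by
    have heq : ∀ᶠ q : ℝ in nhdsWithin (0:ℝ) (Set.Ioo (0:ℝ) 1),
        ((∏' n : ℕ, (1 - (q:ℂ) ^ (n + 1) * 1)) * (∏' n : ℕ, (1 - (q:ℂ) ^ (n + 1) * 1)) *
          ((x * y - 1) * ((∏' n : ℕ, (1 - (q:ℂ) ^ (n + 1) * (x * y))) *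
            (∏' n : ℕ, (1 - (q:ℂ) ^ (n + 1) * (x * y)⁻¹))))) /
          (((x - 1) * ((∏' n : ℕ, (1 - (q:ℂ) ^ (n + 1) * x)) *
            (∏' n : ℕ, (1 - (q:ℂ) ^ (n + 1) * x⁻¹)))) *
           ((y - 1) * ((∏' n : ℕ, (1 - (q:ℂ) ^ (n + 1) * y)) *
            (∏' n : ℕ, (1 - (q:ℂ) ^ (n + 1) * y⁻¹))))) = del (q:ℂ) x y := by
      filter_upwards [self_mem_nhdsWithin] with q hq
      obtain ⟨h1, _⟩ := hqprop q hq
      unfold del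
      rw [E_eq _ h1, phi_eq _ (x*y) h1, phi_eq _ x h1, phi_eq _ y h1]
    have Hnum : Tendsto (fun q : ℝ =>
        (∏' n : ℕ, (1 - (q:ℂ) ^ (n + 1) * 1)) * (∏' n : ℕ, (1 - (q:ℂ) ^ (n + 1) * 1)) *
          ((x * y - 1) * ((∏' n : ℕ, (1 - (q:ℂ) ^ (n + 1) * (x * y))) *
            (∏' n : ℕ, (1 - (q:ℂ) ^ (n + 1) * (x * y)⁻¹)))))
        (nhdsWithin 0 (Set.Ioo (0:ℝ) 1))
        (nhds (1 * 1 * ((x * y - 1) * (1 * 1)))) :=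
      ((aux_tendsto 1).mul (aux_tendsto 1)).mul
        (tendsto_const_nhds.mul ((aux_tendsto (x*y)).mul (aux_tendsto (x*y)⁻¹)))
    have Hden : Tendsto (fun q : ℝ =>
        ((x - 1) * ((∏' n : ℕ, (1 - (q:ℂ) ^ (n + 1) * x)) *
            (∏' n : ℕ, (1 - (q:ℂ) ^ (n + 1) * x⁻¹)))) *
           ((y - 1) * ((∏' n : ℕ, (1 - (q:ℂ) ^ (n + 1) * y)) *
            (∏' n : ℕ, (1 - (q:ℂ) ^ (n + 1) * y⁻¹)))))
        (nhdsWithin 0 (Set.Ioo (0:ℝ) 1))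
        (nhds ((x - 1) * (1 * 1) * ((y - 1) * (1 * 1)))) :=
      (tendsto_const_nhds.mul ((aux_tendsto x).mul (aux_tendsto x⁻¹))).mul
        (tendsto_const_nhds.mul ((aux_tendsto y).mul (aux_tendsto y⁻¹)))
    have Hden0 : (x - 1) * (1 * 1) * ((y - 1) * (1 * 1)) ≠ (0:ℂ) := by
      simp [hx1', hy1']
    have H := Hnum.div Hden Hden0
    have Hval : (1:ℂ) * 1 * ((x * y - 1) * (1 * 1)) / ((x - 1) * (1 * 1) * ((y - 1) * (1 * 1)))
        = (x * y - 1) / ((x - 1) * (y - 1)) := by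
      ring
    rw [Hval] at H
    exact H.congr' heq
  -- combine with shift
  have heq2 : ∀ᶠ q : ℝ in nhdsWithin (0:ℝ) (Set.Ioo (0:ℝ) 1),
      x ^ m * del (q:ℂ) x y = del (q:ℂ) x ((q:ℂ) ^ (-m) * y) := by
    filter_upwards [self_mem_nhdsWithin] with q hq
    obtain ⟨h1, h2⟩ := hqprop q hq
    exact (del_shift (q:ℂ) x y h1 h2 hx0 hy0 m).symm
  have H := (Hdel.const_mul (x ^ m)).congr' heq2
  rwa [← mul_div_assoc] at H
end

section
/- Let F be a field, let r ≥ 2, let t₁, …, t_r be pairwise distinct nonzero elements of F, and let y ∈ F be arbitrary. Then for every integer s with 1 ≤ s ≤ r − 1: ∑_{k=1}^{r} t_k^{−s} · ∏_{ℓ≠k} ((1+y)·(t_k/t_ℓ))/(1 − t_k/t_ℓ) = 0. (This is the localization computation showing that the pushforward of mC(ℙ^{r−1} ∖ coordinate hyperplanes ⊂ ℙ^{r−1})·O(s) to a point vanishes.) -/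
open scoped BigOperators
open Polynomial Finset

lemma leadingCoeff_basisDivisor {F : Type*} [Field F] (x y : F) :
    (Lagrange.basisDivisor x y).leadingCoeff = (x - y)⁻¹ := by
  by_cases h : x = y
  · simp [h, Lagrange.basisDivisor_self]
  · rw [Lagrange.basisDivisor, leadingCoeff_mul, leadingCoeff_C, leadingCoeff_X_sub_C, mul_one]

lemma key {F : Type*} [Field F] (r : ℕ) (t : Fin r → F) (ht : Function.Injective t)
    (m : ℕ) (hm : m < r - 1) :
    ∑ k : Fin r, t k ^ m * ∏ l ∈ Finset.univ.erase k, (t k - t l)⁻¹ = 0 := by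
  have hr : 2 ≤ r := by omega
  have hinj : Set.InjOn t (Finset.univ : Finset (Fin r)) := ht.injOn
  have hdeg : ((X : F[X]) ^ m).degree < (#(Finset.univ : Finset (Fin r)) : ℕ) := by
    rw [degree_X_pow, card_univ, Fintype.card_fin]
    exact_mod_cast (by omega : m < r)
  have h := Lagrange.eq_interpolate hinj hdeg
  have h2 := congrArg (fun p => Polynomial.coeff p (r - 1)) h
  simp only [Lagrange.interpolate_apply, coeff_X_pow, finset_sum_coeff, coeff_C_mul,
    eval_pow, eval_X] at h2
  rw [if_neg (by omega)] at h2
  have hb : ∀ k : Fin r, (Lagrange.basis Finset.univ t k).coeff (r - 1) =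
      ∏ l ∈ Finset.univ.erase k, (t k - t l)⁻¹ := by
    intro k
    have hnd : (Lagrange.basis Finset.univ t k).natDegree = r - 1 := by
      rw [Lagrange.natDegree_basis hinj (mem_univ k), card_univ, Fintype.card_fin]
    rw [← hnd, ← leadingCoeff, Lagrange.basis, leadingCoeff_prod]
    exact Finset.prod_congr rfl fun l _ => leadingCoeff_basisDivisor _ _
  simp_rw [hb] at h2
  exact h2.symm

/-- The localization computation showing that the pushforward of
`mC(ℙ^{r-1} ∖ coordinate hyperplanes ⊂ ℙ^{r-1})·O(s)` to a point vanishes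
for `1 ≤ s ≤ r - 1`. -/
theorem stmt_13 (F : Type*) [Field F] (r : ℕ) (hr : 2 ≤ r)
    (t : Fin r → F) (ht : Function.Injective t) (ht0 : ∀ k, t k ≠ 0)
    (y : F) (s : ℕ) (hs1 : 1 ≤ s) (hs2 : s ≤ r - 1) :
    ∑ k : Fin r, t k ^ (-(s : ℤ)) *
      ∏ l ∈ Finset.univ.erase k, ((1 + y) * (t k / t l)) / (1 - t k / t l) = 0 := by
  have key0 := key r t ht (r - 1 - s) (by omega)
  have h1 : ∀ k : Fin r, t k ^ (-(s : ℤ)) *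
      ∏ l ∈ Finset.univ.erase k, ((1 + y) * (t k / t l)) / (1 - t k / t l)
      = (-(1 + y)) ^ (r - 1) *
        (t k ^ (r - 1 - s) * ∏ l ∈ Finset.univ.erase k, (t k - t l)⁻¹) := by
    intro k
    have hprod : ∀ l ∈ Finset.univ.erase k, ((1 + y) * (t k / t l)) / (1 - t k / t l)
        = (-(1 + y) * t k) * (t k - t l)⁻¹ := by
      intro l hl
      have hne : t k ≠ t l := fun h => (Finset.mem_erase.mp hl).1 (ht h).symm
      have hl0 := ht0 l
      have hsub : t k - t l ≠ 0 := sub_ne_zero.mpr hne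
      have h3 : 1 - t k / t l ≠ 0 := by
        rw [sub_ne_zero]
        exact fun h => hne ((div_eq_one_iff_eq hl0).mp h.symm)
      rw [div_eq_iff h3]
      field_simp
      ring
    rw [Finset.prod_congr rfl hprod, Finset.prod_mul_distrib, Finset.prod_const,
      Finset.card_erase_of_mem (Finset.mem_univ k), Finset.card_univ, Fintype.card_fin,
      mul_pow]
    have e1 : t k ^ (-(s : ℤ)) = (t k ^ s)⁻¹ := by rw [zpow_neg, zpow_natCast]
    have e2 : t k ^ (r - 1) = t k ^ (r - 1 - s) * t k ^ s := by
      rw [← pow_add]; congr 1; omega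
    rw [e1, e2]
    have hks : t k ^ s ≠ 0 := pow_ne_zero _ (ht0 k)
    have hcan : t k ^ s * (t k)⁻¹ ^ s = 1 := by
      rw [← mul_pow, mul_inv_cancel₀ (ht0 k), one_pow]
    field_simp
  rw [Finset.sum_congr rfl fun k _ => h1 k, ← Finset.mul_sum, key0, mul_zero]
end

section
/- Let n ≥ 1 and let a, b be Laurent polynomials in n variables over ℂ, i.e. finitely supported functions (Fin n → ℤ) →₀ ℂ, with b ≠ 0. For σ : Fin n → ℤ let r_σ(c) : ℂ ∖ {0} → ℂ denote the one-variable restriction r_σ(c)(t) = ∑_{v ∈ supp(c)} c(v)·t^{⟨σ,v⟩}, where ⟨σ,v⟩ = ∑ᵢ σᵢvᵢ; call σ generic if the map v ↦ ⟨σ,v⟩ is injective on supp(a) ∪ supp(b). Let the Newton polytope N(c) be the convex hull in ℝⁿ of supp(c) (viewed in ℝⁿ). Then the following are equivalent: (1) N(a) ⊆ N(b); (2) for every generic σ : Fin n → ℤ there exists L ∈ ℂ such that r_σ(a)(t)/r_σ(b)(t) tends to L as t tends to 0 through nonzero complex numbers. -/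
open scoped BigOperators

/-- The restriction of a Laurent polynomial `c` in `n` variables to the
one-parameter subgroup `σ`: `r_σ(c)(t) = ∑_{v ∈ supp c} c(v)·t^{⟨σ,v⟩}`. -/
noncomputable def restrOPS {n : ℕ} (σ : Fin n → ℤ) (c : (Fin n → ℤ) →₀ ℂ)
    (t : ℂ) : ℂ :=
  ∑ v ∈ c.support, c v * t ^ (∑ i, σ i * v i)

/-- The Newton polytope of a Laurent polynomial in `n` variables:
the convex hull in `ℝⁿ` of its support. -/
noncomputable def newtonPolytope {n : ℕ} (c : (Fin n → ℤ) →₀ ℂ) :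
    Set (Fin n → ℝ) :=
  convexHull ℝ ((fun v : Fin n → ℤ => fun i => (v i : ℝ)) '' ↑c.support)

/-- `σ` is generic for the Laurent polynomials `a`, `b` if the pairing
`v ↦ ⟨σ,v⟩` is injective on `supp a ∪ supp b`. -/
def genericOPS {n : ℕ} (σ : Fin n → ℤ) (a b : (Fin n → ℤ) →₀ ℂ) : Prop :=
  Set.InjOn (fun v : Fin n → ℤ => ∑ i, σ i * v i) ↑(a.support ∪ b.support)

namespace Aux

open Filter

variable {n : ℕ}

def pz (σ : Fin n → ℤ) (v : Fin n → ℤ) : ℤ := ∑ i, σ i * v i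

noncomputable def mdeg (σ : Fin n → ℤ) (c : (Fin n → ℤ) →₀ ℂ)
    (hc : c.support.Nonempty) : ℤ :=
  c.support.inf' hc (pz σ)

lemma key (σ : Fin n → ℤ) (c : (Fin n → ℤ) →₀ ℂ) (hc : c.support.Nonempty)
    (hinj : Set.InjOn (pz σ) ↑c.support) :
    ∃ q : ℂ → ℂ, Continuous q ∧ q 0 ≠ 0 ∧
      ∀ t : ℂ, t ≠ 0 → restrOPS σ c t = t ^ (mdeg σ c hc) * q t := by
  set m := mdeg σ c hc with hm
  have hmle : ∀ v ∈ c.support, m ≤ pz σ v := fun v hv => Finset.inf'_le _ hv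
  refine ⟨fun t => ∑ v ∈ c.support, c v * t ^ (pz σ v - m).toNat, ?_, ?_, ?_⟩
  · exact continuous_finset_sum _ fun v _ => continuous_const.mul (continuous_pow _)
  · obtain ⟨v₀, hv₀, hv₀m⟩ := Finset.exists_mem_eq_inf' hc (pz σ)
    have hsum : (∑ v ∈ c.support, c v * (0:ℂ) ^ (pz σ v - m).toNat) = c v₀ := by
      rw [Finset.sum_eq_single v₀]
      · have h0 : (pz σ v₀ - m).toNat = 0 := by
          have : pz σ v₀ = m := hv₀m.symm
          omega
        simp [h0]
      · intro v hv hne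
        have h1 : m ≤ pz σ v := hmle v hv
        have hmeq : m = pz σ v₀ := hv₀m
        have h2 : pz σ v ≠ m := by
          rw [hmeq]
          exact fun h => hne (hinj hv hv₀ h)
        have : (pz σ v - m).toNat ≠ 0 := by omega
        simp [zero_pow this]
      · intro h; exact absurd hv₀ h
    simpa [hsum] using Finsupp.mem_support_iff.mp hv₀
  · intro t ht
    rw [Finset.mul_sum]
    refine Finset.sum_congr rfl fun v hv => ?_
    have h1 : m ≤ pz σ v := hmle v hv
    have h2 : t ^ (pz σ v) = t ^ m * t ^ (pz σ v - m).toNat := by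
      rw [← zpow_natCast t (pz σ v - m).toNat, Int.toNat_of_nonneg (by omega),
        ← zpow_add₀ ht]
      ring_nf
    show c v * t ^ (pz σ v) = _
    rw [h2]; ring

lemma tendsto_of_le (σ : Fin n → ℤ) (a b : (Fin n → ℤ) →₀ ℂ)
    (ha : a.support.Nonempty) (hb : b.support.Nonempty)
    (hinja : Set.InjOn (pz σ) ↑a.support) (hinjb : Set.InjOn (pz σ) ↑b.support)
    (h : mdeg σ b hb ≤ mdeg σ a ha) :
    ∃ L : ℂ, Tendsto (fun t : ℂ => restrOPS σ a t / restrOPS σ b t)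
      (nhdsWithin 0 {0}ᶜ) (nhds L) := by
  obtain ⟨qa, hqac, hqa0, hqa⟩ := key σ a ha hinja
  obtain ⟨qb, hqbc, hqb0, hqb⟩ := key σ b hb hinjb
  set ma := mdeg σ a ha
  set mb := mdeg σ b hb
  set k := (ma - mb).toNat with hk
  have hkc : (k : ℤ) = ma - mb := Int.toNat_of_nonneg (by omega)
  refine ⟨(0:ℂ) ^ k * (qa 0 / qb 0), ?_⟩
  have T1 : Tendsto (fun t : ℂ => t ^ k * (qa t / qb t)) (nhds 0)
      (nhds ((0:ℂ) ^ k * (qa 0 / qb 0))) :=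
    ((continuous_pow k).tendsto 0).mul
      (((hqac.tendsto 0).div (hqbc.tendsto 0)) hqb0)
  refine (T1.mono_left nhdsWithin_le_nhds).congr' ?_
  filter_upwards [self_mem_nhdsWithin] with t ht
  have ht : t ≠ 0 := ht
  have e1 : t ^ ma = t ^ mb * t ^ k := by
    rw [← zpow_natCast t k, hkc, ← zpow_add₀ ht]; ring_nf
  rw [hqa t ht, hqb t ht, e1]
  rw [show t ^ mb * t ^ k * qa t = t ^ mb * (t ^ k * qa t) by ring,
    mul_div_mul_left _ _ (zpow_ne_zero mb ht), mul_div_assoc]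

lemma le_of_tendsto (σ : Fin n → ℤ) (a b : (Fin n → ℤ) →₀ ℂ)
    (ha : a.support.Nonempty) (hb : b.support.Nonempty)
    (hinja : Set.InjOn (pz σ) ↑a.support) (hinjb : Set.InjOn (pz σ) ↑b.support)
    (L : ℂ)
    (hT : Tendsto (fun t : ℂ => restrOPS σ a t / restrOPS σ b t)
      (nhdsWithin 0 {0}ᶜ) (nhds L)) :
    mdeg σ b hb ≤ mdeg σ a ha := by
  by_contra hcon
  push_neg at hcon
  obtain ⟨qa, hqac, hqa0, hqa⟩ := key σ a ha hinja
  obtain ⟨qb, hqbc, hqb0, hqb⟩ := key σ b hb hinjb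
  set ma := mdeg σ a ha
  set mb := mdeg σ b hb
  set k := (mb - ma).toNat with hk
  have hkc : (k : ℤ) = mb - ma := Int.toNat_of_nonneg (by omega)
  have hkne : k ≠ 0 := by omega
  have T2 : Tendsto (fun t : ℂ => t ^ k * (restrOPS σ a t / restrOPS σ b t))
      (nhdsWithin 0 {0}ᶜ) (nhds 0) := by
    have : Tendsto (fun t : ℂ => t ^ k) (nhdsWithin 0 {0}ᶜ) (nhds 0) := by
      have := ((continuous_pow k).tendsto (0:ℂ)).mono_left
        (nhdsWithin_le_nhds (s := {0}ᶜ))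
      simpa [zero_pow hkne] using this
    simpa using this.mul hT
  have T3 : Tendsto (fun t : ℂ => qa t / qb t) (nhdsWithin 0 {0}ᶜ)
      (nhds (qa 0 / qb 0)) :=
    (((hqac.tendsto 0).div (hqbc.tendsto 0)) hqb0).mono_left nhdsWithin_le_nhds
  have heq : (fun t : ℂ => t ^ k * (restrOPS σ a t / restrOPS σ b t))
      =ᶠ[nhdsWithin 0 {0}ᶜ] fun t => qa t / qb t := by
    filter_upwards [self_mem_nhdsWithin] with t ht
    have ht : t ≠ 0 := ht
    have e1 : t ^ k * t ^ ma = t ^ mb := by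
      rw [← zpow_natCast t k, hkc, ← zpow_add₀ ht]; ring_nf
    rw [hqa t ht, hqb t ht, mul_div_assoc' (t ^ k),
      show t ^ k * (t ^ ma * qa t) = t ^ k * t ^ ma * qa t by ring, e1,
      mul_div_mul_left _ _ (zpow_ne_zero mb ht)]
  have := tendsto_nhds_unique (T2.congr' heq) T3
  exact div_ne_zero hqa0 hqb0 this.symm

variable {n : ℕ}

def pr (σ : Fin n → ℝ) (v : Fin n → ℤ) : ℝ := ∑ i, σ i * v i

lemma continuous_pairing (d : Fin n → ℝ) :
    Continuous fun σ : Fin n → ℝ => ∑ i, σ i * d i :=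
  continuous_finset_sum _ fun i _ => (continuous_apply i).mul continuous_const

lemma continuous_pr (v : Fin n → ℤ) : Continuous fun σ : Fin n → ℝ => pr σ v :=
  continuous_pairing _

lemma pairing_single (d : Fin n → ℝ) (i₀ : Fin n) :
    ∑ i, (Pi.single i₀ 1 : Fin n → ℝ) i * d i = d i₀ := by
  rw [Finset.sum_eq_single i₀]
  · simp
  · intro i _ hne; simp [Pi.single_eq_of_ne hne]
  · simp

lemma dense_compl (d : Fin n → ℝ) (hd : d ≠ 0) :
    Dense {σ : Fin n → ℝ | ∑ i, σ i * d i ≠ 0} := by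
  obtain ⟨i₀, hi₀⟩ := Function.ne_iff.mp hd
  intro x
  by_cases hx : ∑ i, x i * d i ≠ 0
  · exact subset_closure hx
  push_neg at hx
  set u : Fin n → ℝ := Pi.single i₀ 1 with hu
  refine mem_closure_iff_seq_limit.mpr
    ⟨fun m => fun i => x i + (1/(m+1) : ℝ) * u i, fun m => ?_, ?_⟩
  · show ∑ i, (x i + (1/(m+1):ℝ) * u i) * d i ≠ 0
    have hcalc : ∑ i, (x i + (1/(m+1):ℝ) * u i) * d i
        = ∑ i, x i * d i + (1/(m+1):ℝ) * ∑ i, u i * d i := by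
      rw [Finset.mul_sum, ← Finset.sum_add_distrib]
      exact Finset.sum_congr rfl fun i _ => by ring
    rw [hcalc, hx, hu, pairing_single, zero_add]
    have hpos : (0:ℝ) < 1/(m+1) := by positivity
    exact mul_ne_zero (ne_of_gt hpos) (by simpa using hi₀)
  · rw [tendsto_pi_nhds]
    intro i
    have h0 : Tendsto (fun m : ℕ => (1/(m+1) : ℝ)) atTop (nhds 0) :=
      tendsto_one_div_add_atTop_nhds_zero_nat
    have := (h0.mul_const (u i)).const_add (x i)
    simpa using this

lemma dense_generic (S : Finset (Fin n → ℤ)) :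
    Dense {σ : Fin n → ℝ | ∀ v ∈ S, ∀ w ∈ S, v ≠ w → pr σ v ≠ pr σ w} := by
  have heq : {σ : Fin n → ℝ | ∀ v ∈ S, ∀ w ∈ S, v ≠ w → pr σ v ≠ pr σ w}
      = ⋂ p : {p : (Fin n → ℤ) × (Fin n → ℤ) // p.1 ∈ S ∧ p.2 ∈ S ∧ p.1 ≠ p.2},
          {σ : Fin n → ℝ | pr σ p.1.1 ≠ pr σ p.1.2} := by
    ext σ
    simp only [Set.mem_setOf_eq, Set.mem_iInter]
    constructor
    · rintro h ⟨⟨v, w⟩, hv, hw, hne⟩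
      exact h v hv w hw hne
    · intro h v hv w hw hne
      exact h ⟨(v, w), hv, hw, hne⟩
  rw [heq]
  apply dense_iInter_of_isOpen
  · rintro ⟨⟨v, w⟩, hv, hw, hne⟩
    exact isOpen_ne_fun (continuous_pr v) (continuous_pr w)
  · rintro ⟨⟨v, w⟩, hv, hw, hne⟩
    have hd : (fun i => (v i : ℝ) - (w i : ℝ)) ≠ 0 := by
      obtain ⟨i, hi⟩ := Function.ne_iff.mp hne
      refine Function.ne_iff.mpr ⟨i, ?_⟩
      simp only [Pi.zero_apply, sub_ne_zero]
      exact_mod_cast hi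
    have := dense_compl _ hd
    refine this.mono ?_
    intro σ hσ
    simp only [Set.mem_setOf_eq] at hσ ⊢
    intro hvw
    apply hσ
    have : ∑ i, σ i * ((v i : ℝ) - (w i : ℝ))
        = (∑ i, σ i * (v i : ℝ)) - ∑ i, σ i * (w i : ℝ) := by
      rw [← Finset.sum_sub_distrib]
      exact Finset.sum_congr rfl fun i _ => by ring
    rw [this]
    exact sub_eq_zero.mpr hvw

lemma exists_rat_vec (U : Set (Fin n → ℝ)) (hU : IsOpen U) (hne : U.Nonempty) :
    ∃ q : Fin n → ℚ, (fun i => (q i : ℝ)) ∈ U := by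
  obtain ⟨x, hx⟩ := hne
  obtain ⟨ε, hε, hball⟩ := Metric.isOpen_iff.mp hU x hx
  choose q hq using fun i => exists_rat_near (x i) (half_pos hε)
  refine ⟨q, hball ?_⟩
  rw [Metric.mem_ball, dist_pi_lt_iff hε]
  intro i
  rw [Real.dist_eq]
  calc |(q i : ℝ) - x i| = |x i - q i| := abs_sub_comm _ _
    _ < ε / 2 := hq i
    _ < ε := half_lt_self hε

lemma rat_to_int (q : Fin n → ℚ) :
    ∃ (τ : Fin n → ℤ) (N : ℕ), 0 < N ∧ ∀ i, (τ i : ℚ) = N * q i := by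
  classical
  set N : ℕ := ∏ j, (q j).den with hN
  have hNpos : 0 < N := Finset.prod_pos fun j _ => (q j).pos
  refine ⟨fun i => (q i).num * (N / (q i).den : ℕ), N, hNpos, fun i => ?_⟩
  have hdvd : (q i).den ∣ N := Finset.dvd_prod_of_mem _ (Finset.mem_univ i)
  obtain ⟨k, hk⟩ := hdvd
  have hkN : N / (q i).den = k := by rw [hk]; exact Nat.mul_div_cancel_left _ (q i).pos
  have hden : ((q i).den : ℚ) ≠ 0 := Nat.cast_ne_zero.mpr (q i).pos.ne'
  have hnum : ((q i).num : ℚ) = q i * (q i).den := by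
    exact (div_eq_iff hden).mp (Rat.num_div_den (q i))
  show (((q i).num * (N / (q i).den : ℕ) : ℤ) : ℚ) = N * q i
  rw [hkN, hk]
  push_cast
  rw [hnum]
  ring



lemma pr_isLinear (σ : Fin n → ℝ) :
    IsLinearMap ℝ (fun x : Fin n → ℝ => ∑ i, σ i * x i) := by
  constructor
  · intro x y
    rw [← Finset.sum_add_distrib]
    exact Finset.sum_congr rfl fun i _ => by simp [Pi.add_apply]; ring
  · intro c x
    rw [Finset.smul_sum]
    exact Finset.sum_congr rfl fun i _ => by simp [Pi.smul_apply, smul_eq_mul]; ring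

lemma halfspace (σ : Fin n → ℝ) (b : (Fin n → ℤ) →₀ ℂ) (hbne : b.support.Nonempty)
    (x : Fin n → ℝ) (hx : x ∈ newtonPolytope b) :
    b.support.inf' hbne (pr σ) ≤ ∑ i, σ i * x i := by
  set m := b.support.inf' hbne (pr σ) with hm
  have hsub : newtonPolytope b ⊆ {y : Fin n → ℝ | m ≤ ∑ i, σ i * y i} := by
    apply convexHull_min
    · rintro _ ⟨v, hv, rfl⟩
      show m ≤ ∑ i, σ i * (v i : ℝ)
      exact Finset.inf'_le _ (Finset.mem_coe.mp hv)
    · exact convex_halfSpace_ge (pr_isLinear σ) m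
  exact hsub hx

lemma clm_repr (f : (Fin n → ℝ) →L[ℝ] ℝ) (x : Fin n → ℝ) :
    f x = ∑ i, x i * f (Pi.single i 1) := by
  have hx : x = ∑ i, x i • (Pi.single i 1 : Fin n → ℝ) := by
    have h1 : ∀ i, x i • (Pi.single i 1 : Fin n → ℝ) = Pi.single i (x i) := by
      intro i
      rw [← Pi.single_smul, smul_eq_mul, mul_one]
    simp_rw [h1]
    exact (Finset.univ_sum_single x).symm
  conv_lhs => rw [hx]
  rw [map_sum]
  exact Finset.sum_congr rfl fun i _ => by rw [map_smul, smul_eq_mul]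

lemma sep (b : (Fin n → ℤ) →₀ ℂ) (v₀ : Fin n → ℤ)
    (hv₀ : (fun i => (v₀ i : ℝ)) ∉ newtonPolytope b) :
    ∃ σ : Fin n → ℝ, ∀ w ∈ b.support, pr σ v₀ < pr σ w := by
  have hclosed : IsClosed (newtonPolytope b) :=
    Set.Finite.isClosed_convexHull ℝ ((b.support.finite_toSet).image _)
  obtain ⟨f, u, hfu, huf⟩ := geometric_hahn_banach_closed_point
    (convex_convexHull ℝ _) hclosed hv₀
  refine ⟨fun i => -(f (Pi.single i 1)), fun w hw => ?_⟩
  have key : ∀ x : Fin n → ℤ,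
      pr (fun i => -(f (Pi.single i 1))) x = -f (fun i => (x i : ℝ)) := by
    intro x
    rw [clm_repr f, pr, ← Finset.sum_neg_distrib]
    exact Finset.sum_congr rfl fun i _ => by ring
  have h1 : f (fun i => (w i : ℝ)) < u :=
    hfu _ (subset_convexHull ℝ _ ⟨w, hw, rfl⟩)
  rw [key v₀, key w]
  linarith

lemma open_generic (S : Finset (Fin n → ℤ)) :
    IsOpen {σ : Fin n → ℝ | ∀ v ∈ S, ∀ w ∈ S, v ≠ w → pr σ v ≠ pr σ w} := by
  have heq : {σ : Fin n → ℝ | ∀ v ∈ S, ∀ w ∈ S, v ≠ w → pr σ v ≠ pr σ w}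
      = ⋂ v ∈ S, ⋂ w ∈ S, {σ : Fin n → ℝ | v ≠ w → pr σ v ≠ pr σ w} := by
    ext σ; simp
  rw [heq]
  refine Set.Finite.isOpen_biInter S.finite_toSet fun v _ =>
    Set.Finite.isOpen_biInter S.finite_toSet fun w _ => ?_
  by_cases hvw : v = w
  · simp [hvw]
  · have h2 : {σ : Fin n → ℝ | v ≠ w → pr σ v ≠ pr σ w}
        = {σ : Fin n → ℝ | pr σ v ≠ pr σ w} := by
      ext σ; simp [hvw]
    rw [h2]
    exact isOpen_ne_fun (continuous_pr v) (continuous_pr w)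


end Aux



/-- The Newton polytope/limit criterion: `N(a) ⊆ N(b)` iff for every generic
one-parameter subgroup `σ` the quotient of the restrictions of `a` and `b`
has a limit as `t → 0` through nonzero complex numbers. -/
theorem stmt_14 (n : ℕ) (hn : 1 ≤ n) (a b : (Fin n → ℤ) →₀ ℂ) (hb : b ≠ 0) :
    newtonPolytope a ⊆ newtonPolytope b ↔
      ∀ σ : Fin n → ℤ, genericOPS σ a b →
        ∃ L : ℂ, Filter.Tendsto (fun t : ℂ => restrOPS σ a t / restrOPS σ b t)
          (nhdsWithin 0 {0}ᶜ) (nhds L) := by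
  classical
  have hbne : b.support.Nonempty := Finsupp.support_nonempty_iff.mpr hb
  by_cases ha : a = 0
  · subst ha
    constructor
    · intro _ σ _
      refine ⟨0, ?_⟩
      have heq : (fun t : ℂ => restrOPS σ 0 t / restrOPS σ b t) = fun _ => 0 := by
        funext t; simp [restrOPS]
      rw [heq]
      exact tendsto_const_nhds
    · intro _ x hx
      exfalso
      simp [newtonPolytope] at hx
  · have hane : a.support.Nonempty := Finsupp.support_nonempty_iff.mpr ha
    constructor
    · intro hsub σ hσ
      have hinja : Set.InjOn (Aux.pz σ) ↑a.support :=
        hσ.mono (Finset.coe_subset.mpr Finset.subset_union_left)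
      have hinjb : Set.InjOn (Aux.pz σ) ↑b.support :=
        hσ.mono (Finset.coe_subset.mpr Finset.subset_union_right)
      apply Aux.tendsto_of_le σ a b hane hbne hinja hinjb
      apply Finset.le_inf'
      intro v hv
      have hx : (fun i => (v i : ℝ)) ∈ newtonPolytope b :=
        hsub (subset_convexHull ℝ _ ⟨v, hv, rfl⟩)
      have h1 := Aux.halfspace (fun i => (σ i : ℝ)) b hbne _ hx
      have h5 : ∀ w : Fin n → ℤ,
          Aux.pr (fun i => (σ i : ℝ)) w = ((Aux.pz σ w : ℤ) : ℝ) := by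
        intro w
        unfold Aux.pr Aux.pz
        push_cast
        rfl
      have h2 : ((Aux.mdeg σ b hbne : ℤ) : ℝ)
          ≤ b.support.inf' hbne (Aux.pr fun i => (σ i : ℝ)) := by
        apply Finset.le_inf'
        intro w hw
        have h3 : Aux.mdeg σ b hbne ≤ Aux.pz σ w := Finset.inf'_le _ hw
        rw [h5 w]
        exact_mod_cast h3
      have h6 : ((Aux.mdeg σ b hbne : ℤ) : ℝ) ≤ ((Aux.pz σ v : ℤ) : ℝ) := by
        refine h2.trans ?_
        rw [← h5 v]
        exact h1
      exact_mod_cast h6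
    · intro H x hx
      suffices hsupp : ∀ v₀ ∈ a.support, (fun i => (v₀ i : ℝ)) ∈ newtonPolytope b by
        refine convexHull_min ?_ (convex_convexHull ℝ _) hx
        rintro _ ⟨v, hv, rfl⟩
        exact hsupp v (Finset.mem_coe.mp hv)
      intro v₀ hv₀
      by_contra hout
      obtain ⟨σ₀, hσ₀⟩ := Aux.sep b v₀ hout
      set S : Finset (Fin n → ℤ) := a.support ∪ b.support with hS
      set U : Set (Fin n → ℝ) :=
        {σ | ∀ w ∈ b.support, Aux.pr σ v₀ < Aux.pr σ w} with hU
      set G : Set (Fin n → ℝ) :=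
        {σ | ∀ v ∈ S, ∀ w ∈ S, v ≠ w → Aux.pr σ v ≠ Aux.pr σ w} with hG
      have hUopen : IsOpen U := by
        have h7 : U = ⋂ w ∈ b.support,
            {σ : Fin n → ℝ | Aux.pr σ v₀ < Aux.pr σ w} := by
          ext σ; simp [hU]
        rw [h7]
        exact Set.Finite.isOpen_biInter b.support.finite_toSet fun w _ =>
          isOpen_lt (Aux.continuous_pr v₀) (Aux.continuous_pr w)
      have hGopen : IsOpen G := Aux.open_generic S
      have hGdense : Dense G := Aux.dense_generic S
      obtain ⟨q, hq⟩ := Aux.exists_rat_vec (U ∩ G) (hUopen.inter hGopen)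
        (hGdense.inter_open_nonempty U hUopen ⟨σ₀, hσ₀⟩)
      obtain ⟨hqU, hqG⟩ := hq
      obtain ⟨τ, N, hN, hτ⟩ := Aux.rat_to_int q
      have hτR : ∀ i, ((τ i : ℝ)) = (N : ℝ) * (q i : ℝ) := by
        intro i
        exact_mod_cast congrArg (fun r : ℚ => (r : ℝ)) (hτ i)
      have hpair : ∀ v : Fin n → ℤ,
          ((Aux.pz τ v : ℤ) : ℝ) = (N : ℝ) * Aux.pr (fun i => (q i : ℝ)) v := by
        intro v
        unfold Aux.pz Aux.pr
        push_cast
        rw [Finset.mul_sum]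
        refine Finset.sum_congr rfl fun i _ => ?_
        rw [hτR i]
        ring
      have hNne : (N : ℝ) ≠ 0 := Nat.cast_ne_zero.mpr hN.ne'
      have hgen : genericOPS τ a b := by
        intro v hv w hw hvw
        by_contra hne
        refine hqG v (Finset.mem_coe.mp hv) w (Finset.mem_coe.mp hw) hne ?_
        have h8 : ((Aux.pz τ v : ℤ) : ℝ) = ((Aux.pz τ w : ℤ) : ℝ) := by
          exact_mod_cast congrArg (fun z : ℤ => (z : ℝ)) hvw
        rw [hpair v, hpair w] at h8
        exact mul_left_cancel₀ hNne h8
      obtain ⟨L, hL⟩ := H τ hgen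
      have hinja : Set.InjOn (Aux.pz τ) ↑a.support :=
        hgen.mono (Finset.coe_subset.mpr Finset.subset_union_left)
      have hinjb : Set.InjOn (Aux.pz τ) ↑b.support :=
        hgen.mono (Finset.coe_subset.mpr Finset.subset_union_right)
      have hle := Aux.le_of_tendsto τ a b hane hbne hinja hinjb L hL
      have h7 : Aux.mdeg τ a hane ≤ Aux.pz τ v₀ := Finset.inf'_le _ hv₀
      have h8 : Aux.pz τ v₀ < Aux.mdeg τ b hbne := by
        unfold Aux.mdeg
        rw [Finset.lt_inf'_iff]
        intro w hw
        have h9 := hqU w hw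
        have hcast : ((Aux.pz τ v₀ : ℤ) : ℝ) < ((Aux.pz τ w : ℤ) : ℝ) := by
          rw [hpair, hpair]
          exact mul_lt_mul_of_pos_left h9 (by exact_mod_cast hN)
        exact_mod_cast hcast
      omega
end
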